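/- arXiv:0905.4953 — 6 statements merged into one kernel-verified Lean document; each statement's English description precedes it below -/
import Mathlib

section
/- If rank(A) > 1 for an effect A, then the Lüders operation Λ_A(ρ) = √A ρ √A is not a conditional state preparator: there is no density matrix ξ with Λ_A(ρ) = tr[ρA] ξ for all ρ. -/
open Matrix Kronecker
open scoped ComplexOrder

/-- A density matrix (quantum state). -/
def IsDensity {n : Type*} [Fintype n] (ρ : Matrix n n ℂ) : Prop :=
  ρ.PosSemidef ∧ ρ.trace = 1

/-- An effect: `0 ≤ A ≤ I`. -/
def IsEffect {n : Type*} [Fintype n] [DecidableEq n] (A : Matrix n n ℂ) : Prop :=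
  A.PosSemidef ∧ (1 - A).PosSemidef

/-- Complete positivity, via the existence of a finite Kraus decomposition
(equivalent to complete positivity in finite dimension). -/
def IsCP {n : Type*} [Fintype n] (Φ : Matrix n n ℂ → Matrix n n ℂ) : Prop :=
  ∃ (m : ℕ) (X : Fin m → Matrix n n ℂ), ∀ ρ, Φ ρ = ∑ k, X k * ρ * (X k)ᴴ

/-- A quantum operation: completely positive and `0 ≤ tr[Φ(ρ)] ≤ 1` on states. -/
def IsOperation {n : Type*} [Fintype n] (Φ : Matrix n n ℂ → Matrix n n ℂ) : Prop :=
  IsCP Φ ∧ ∀ ρ, IsDensity ρ → ∃ t : ℝ, (Φ ρ).trace = (t : ℂ) ∧ 0 ≤ t ∧ t ≤ 1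

/-- The Choi–Jamiolkowski operator `(Φ ⊗ I)(|ψ₊⟩⟨ψ₊|)` of a map on `d × d` matrices. -/
noncomputable def Choi {d : ℕ} (Φ : Matrix (Fin d) (Fin d) ℂ → Matrix (Fin d) (Fin d) ℂ) :
    Matrix (Fin d × Fin d) (Fin d × Fin d) ℂ :=
  ((d : ℂ))⁻¹ • ∑ j : Fin d, ∑ k : Fin d,
    (Φ (Matrix.single j k 1)) ⊗ₖ (Matrix.single j k 1)

/-- Partial trace over the first tensor factor. -/
noncomputable def ptr1 {d : ℕ} (M : Matrix (Fin d × Fin d) (Fin d × Fin d) ℂ) :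
    Matrix (Fin d) (Fin d) ℂ :=
  Matrix.of fun i j => ∑ k : Fin d, M (k, i) (k, j)

/-- Partial trace over the second tensor factor. -/
noncomputable def ptr2 {d : ℕ} (M : Matrix (Fin d × Fin d) (Fin d × Fin d) ℂ) :
    Matrix (Fin d) (Fin d) ℂ :=
  Matrix.of fun i j => ∑ k : Fin d, M (i, k) (j, k)

/-- Coexistence via a four-outcome instrument: four CP maps with trace-preserving sum,
`Φ = J₁ + J₂` and `Ψ = J₁ + J₃`. -/
def Coexistent4 {n : Type*} [Fintype n] (Φ Ψ : Matrix n n ℂ → Matrix n n ℂ) : Prop :=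
  ∃ J₁ J₂ J₃ J₄ : Matrix n n ℂ → Matrix n n ℂ,
    IsCP J₁ ∧ IsCP J₂ ∧ IsCP J₃ ∧ IsCP J₄ ∧
    (∀ ρ, IsDensity ρ → (J₁ ρ + J₂ ρ + J₃ ρ + J₄ ρ).trace = 1) ∧
    (∀ ρ, Φ ρ = J₁ ρ + J₂ ρ) ∧ (∀ ρ, Ψ ρ = J₁ ρ + J₃ ρ)

/-- Coexistence in Kraus form: a common family of Kraus operators `{X_j}` with
`∑ⱼ Xⱼ* Xⱼ ≤ I`, and index subsets realizing `Φ` and `Ψ`. -/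
def KrausCoexistent {n : Type*} [Fintype n] [DecidableEq n]
    (Φ Ψ : Matrix n n ℂ → Matrix n n ℂ) : Prop :=
  ∃ (m : ℕ) (X : Fin m → Matrix n n ℂ) (J₁ J₂ : Finset (Fin m)),
    (∀ ρ, Φ ρ = ∑ j ∈ J₁, X j * ρ * (X j)ᴴ) ∧
    (∀ ρ, Ψ ρ = ∑ j ∈ J₂, X j * ρ * (X j)ᴴ) ∧
    ((1 : Matrix n n ℂ) - ∑ j, (X j)ᴴ * X j).PosSemidef

/-- The positive square root of a positive semidefinite matrix (as in the older Mathlib). -/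
noncomputable def Matrix.PosSemidef.sqrt {n : Type*} [Fintype n] [DecidableEq n]
    {A : Matrix n n ℂ} (hA : A.PosSemidef) : Matrix n n ℂ :=
  hA.1.eigenvectorUnitary.1 * diagonal ((↑) ∘ Real.sqrt ∘ hA.1.eigenvalues) *
    (star hA.1.eigenvectorUnitary : Matrix n n ℂ)
theorem Matrix.PosSemidef.sqrt_mul_self' {n : Type*} [Fintype n] [DecidableEq n]
    {A : Matrix n n ℂ} (hA : A.PosSemidef) : hA.sqrt * hA.sqrt = A := by
  have hU : (star hA.1.eigenvectorUnitary : Matrix n n ℂ) * hA.1.eigenvectorUnitary.1 = 1 :=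
    Unitary.coe_star_mul_self _
  have hd : diagonal ((↑) ∘ Real.sqrt ∘ hA.1.eigenvalues) *
      diagonal ((↑) ∘ Real.sqrt ∘ hA.1.eigenvalues) =
      diagonal (RCLike.ofReal ∘ hA.1.eigenvalues : n → ℂ) := by
    rw [diagonal_mul_diagonal]
    congr 1
    funext i
    simp only [Function.comp_apply]
    rw [← Complex.ofReal_mul, Real.mul_self_sqrt (hA.eigenvalues_nonneg i)]
    rfl
  conv_rhs => rw [hA.1.spectral_theorem, Unitary.conjStarAlgAut_apply]
  unfold Matrix.PosSemidef.sqrt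
  calc _ = hA.1.eigenvectorUnitary.1 * diagonal ((↑) ∘ Real.sqrt ∘ hA.1.eigenvalues) *
      ((star hA.1.eigenvectorUnitary : Matrix n n ℂ) * hA.1.eigenvectorUnitary.1) *
      diagonal ((↑) ∘ Real.sqrt ∘ hA.1.eigenvalues) *
      (star hA.1.eigenvectorUnitary : Matrix n n ℂ) := by simp only [Matrix.mul_assoc]
    _ = _ := by rw [hU, Matrix.mul_one, Matrix.mul_assoc _ (diagonal _) (diagonal _), hd]

/-- if an effect `A` has rank at least 2, then the Lüders operation `Λ_A`
is not a conditional state preparator. -/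
theorem stmt5 (d : ℕ) (A : Matrix (Fin d) (Fin d) ℂ)
    (hA : A.PosSemidef) (hA' : ((1 : Matrix (Fin d) (Fin d) ℂ) - A).PosSemidef)
    (hrank : 2 ≤ A.rank) :
    ¬ ∃ ξ : Matrix (Fin d) (Fin d) ℂ, IsDensity ξ ∧
        ∀ ρ : Matrix (Fin d) (Fin d) ℂ,
          hA.sqrt * ρ * hA.sqrt = (ρ * A).trace • ξ := by
  
  rintro ⟨ξ, _, h⟩
  set B := hA.sqrt with hB
  have hBB : B * B = A := hA.sqrt_mul_self'
  have key : ∀ i j k l, B k i * B j l = A j i * ξ k l := by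
    intro i j k l
    have h1 := congrFun (congrFun (h (Matrix.single i j (1:ℂ))) k) l
    have lhs : (B * (Matrix.single i j (1:ℂ)) * B) k l = B k i * B j l := by
      simp only [Matrix.mul_apply, Matrix.single, Matrix.of_apply, mul_ite, ite_mul,
        mul_one, mul_zero, zero_mul, one_mul, ite_and, Finset.sum_ite_eq, Finset.sum_ite_eq',
        Finset.mem_univ, if_true]
    have rhs : (((Matrix.single i j (1:ℂ)) * A).trace : ℂ) = A j i := by
      simp only [Matrix.trace, Matrix.diag, Matrix.mul_apply, Matrix.single,
        Matrix.of_apply, ite_mul, one_mul, zero_mul, ite_and, Finset.sum_ite_eq,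
        Finset.mem_univ, if_true]
      simp
    rw [lhs, rhs] at h1
    simpa using h1
  by_cases hB0 : B = 0
  · have hA0 : A = 0 := by rw [← hBB, hB0, mul_zero]
    rw [hA0, Matrix.rank_zero] at hrank
    omega
  · obtain ⟨j, l, hjl⟩ : ∃ j l, B j l ≠ 0 := by
      by_contra hcon
      push_neg at hcon
      exact hB0 (Matrix.ext fun j l => hcon j l)
    have hBfac : B = Matrix.replicateCol (Fin 1) (fun k => ξ k l * (B j l)⁻¹) *
        Matrix.replicateRow (Fin 1) (fun i => A j i) := by
      ext k i
      have hk := key i j k l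
      simp only [Matrix.mul_apply, Matrix.replicateCol, Matrix.replicateRow, Matrix.of_apply,
        Finset.sum_const, Finset.card_univ, Fintype.card_fin, one_smul]
      field_simp
      linear_combination hk
    have hcol : (Matrix.replicateCol (Fin 1) (fun k => ξ k l * (B j l)⁻¹)).rank ≤ 1 := by
      have := Matrix.rank_le_card_width (Matrix.replicateCol (Fin 1) (fun k => ξ k l * (B j l)⁻¹))
      simpa using this
    have hrB : B.rank ≤ 1 := by
      rw [hBfac]
      exact le_trans (Matrix.rank_mul_le_left _ _) hcol
    have hrA : A.rank ≤ 1 := by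
      rw [← hBB]
      exact le_trans (Matrix.rank_mul_le_left _ _) hrB
    omega
end

section
/- Two operations Φ and Ψ on ℂ^d are coexistent if and only if there exists a finite family of operators {X_j}_{j∈J} and subsets J₁, J₂ ⊆ J such that Φ(ρ) = Σ_{j∈J₁} X_j ρ X_j*, Ψ(ρ) = Σ_{j∈J₂} X_j ρ X_j*, and Σ_{j∈J} X_j* X_j = I; moreover J can be chosen with at most 3d² + 1 elements. -/
open Matrix Kronecker
open scoped ComplexOrder

section Helpers

open Matrix
open scoped ComplexOrder

private lemma kraus_apply' {d : ℕ} (Z ρ : Matrix (Fin d) (Fin d) ℂ) (a c : Fin d) :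
    (Z * ρ * Zᴴ) a c = ∑ b, ∑ e, ρ b e * (Z a b * star (Z c e)) := by
  simp only [Matrix.mul_apply, Matrix.conjTranspose_apply, Finset.sum_mul]
  rw [Finset.sum_comm]
  exact Finset.sum_congr rfl fun b _ => Finset.sum_congr rfl fun e _ => by ring

private lemma kraus_sum_apply' {d m : ℕ} (X : Fin m → Matrix (Fin d) (Fin d) ℂ)
    (ρ : Matrix (Fin d) (Fin d) ℂ) (a c : Fin d) :
    (∑ k, X k * ρ * (X k)ᴴ) a c
      = ∑ b, ∑ e, ρ b e * ∑ k, X k a b * star (X k c e) := by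
  rw [Matrix.sum_apply]
  calc ∑ k, (X k * ρ * (X k)ᴴ) a c
      = ∑ k, ∑ b, ∑ e, ρ b e * (X k a b * star (X k c e)) :=
        Finset.sum_congr rfl fun k _ => kraus_apply' (X k) ρ a c
    _ = ∑ b, ∑ k, ∑ e, ρ b e * (X k a b * star (X k c e)) := Finset.sum_comm
    _ = ∑ b, ∑ e, ∑ k, ρ b e * (X k a b * star (X k c e)) :=
        Finset.sum_congr rfl fun b _ => Finset.sum_comm
    _ = ∑ b, ∑ e, ρ b e * ∑ k, X k a b * star (X k c e) := by
        simp [Finset.mul_sum]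

private lemma psd_eq_conjTranspose_mul_self' {n : Type*} [Fintype n] [DecidableEq n]
    {A : Matrix n n ℂ} (h : A.PosSemidef) : ∃ B : Matrix n n ℂ, A = Bᴴ * B := by
  open scoped MatrixOrder in
  obtain ⟨B, hB⟩ := CStarAlgebra.nonneg_iff_eq_star_mul_self.mp h.nonneg
  exact ⟨B, hB⟩

/-- Kraus compression: any Kraus-sum map on `d × d` matrices can be realized with `d * d`
operators, preserving the normalization sum. -/
private lemma kraus_compress' (d m : ℕ) (X : Fin m → Matrix (Fin d) (Fin d) ℂ) :
    ∃ Y : Fin (d * d) → Matrix (Fin d) (Fin d) ℂ,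
      (∀ ρ, ∑ k, X k * ρ * (X k)ᴴ = ∑ i, Y i * ρ * (Y i)ᴴ) ∧
      (∑ i, (Y i)ᴴ * Y i) = ∑ k, (X k)ᴴ * X k := by
  classical
  set A : Matrix (Fin m) (Fin d × Fin d) ℂ :=
    Matrix.of (fun k q => star (X k q.1 q.2)) with hA
  obtain ⟨B, hB⟩ := psd_eq_conjTranspose_mul_self'
    (Matrix.posSemidef_conjTranspose_mul_self A)
  set Y : Fin (d * d) → Matrix (Fin d) (Fin d) ℂ :=
    fun r => Matrix.of (fun a b => star (B (finProdFinEquiv.symm r) (a, b))) with hY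
  have key : ∀ p q : Fin d × Fin d,
      ∑ k, X k p.1 p.2 * star (X k q.1 q.2)
        = ∑ r : Fin d × Fin d, star (B r p) * B r q := by
    intro p q
    have := congrFun (congrFun hB p) q
    simpa [Matrix.mul_apply, hA, Matrix.conjTranspose_apply, mul_comm] using this
  have keyY : ∀ p q : Fin d × Fin d,
      ∑ k, X k p.1 p.2 * star (X k q.1 q.2)
        = ∑ r : Fin (d * d), Y r p.1 p.2 * star (Y r q.1 q.2) := by
    intro p q
    rw [key p q]
    rw [← (finProdFinEquiv.symm).sum_comp (fun r => star (B r p) * B r q)]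
    simp [hY]
  refine ⟨Y, ?_, ?_⟩
  · intro ρ
    ext a c
    rw [kraus_sum_apply', kraus_sum_apply']
    refine Finset.sum_congr rfl fun b _ => Finset.sum_congr rfl fun e _ => ?_
    rw [keyY (a, b) (c, e)]
  · ext b e
    have h1 : (∑ i, (Y i)ᴴ * Y i) b e
        = ∑ a, ∑ r : Fin (d*d), star (Y r a b) * Y r a e := by
      simp only [Matrix.sum_apply, Matrix.mul_apply, Matrix.conjTranspose_apply]
      rw [Finset.sum_comm]
    have h2 : (∑ k, (X k)ᴴ * X k) b e
        = ∑ a, ∑ k, star (X k a b) * X k a e := by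
      simp only [Matrix.sum_apply, Matrix.mul_apply, Matrix.conjTranspose_apply]
      rw [Finset.sum_comm]
    rw [h1, h2]
    refine Finset.sum_congr rfl fun a _ => ?_
    have := keyY (a, b) (a, e)
    calc ∑ r : Fin (d*d), star (Y r a b) * Y r a e
        = star (∑ r : Fin (d*d), Y r a b * star (Y r a e)) := by
          simp [star_sum, mul_comm]
      _ = star (∑ k, X k a b * star (X k a e)) := by rw [← this]
      _ = ∑ k, star (X k a b) * X k a e := by simp [star_sum, mul_comm]

private lemma isCP_finset_sum' {n : Type*} [Fintype n] [DecidableEq n] {m : ℕ}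
    (X : Fin m → Matrix n n ℂ) (s : Finset (Fin m)) :
    IsCP (fun ρ => ∑ j ∈ s, X j * ρ * (X j)ᴴ) := by
  classical
  refine ⟨s.card, fun k => X (s.equivFin.symm k), fun ρ => ?_⟩
  show ∑ j ∈ s, X j * ρ * (X j)ᴴ = _
  rw [← Finset.sum_coe_sort s (fun j => X j * ρ * (X j)ᴴ)]
  exact Fintype.sum_equiv s.equivFin _ _ (fun j => by simp)

private lemma trace_kraus' {n : Type*} [Fintype n] {m : ℕ}
    (X : Fin m → Matrix n n ℂ) (s : Finset (Fin m)) (ρ : Matrix n n ℂ) :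
    (∑ j ∈ s, X j * ρ * (X j)ᴴ).trace = ((∑ j ∈ s, (X j)ᴴ * X j) * ρ).trace := by
  rw [Matrix.trace_sum, Finset.sum_mul, Matrix.trace_sum]
  exact Finset.sum_congr rfl fun j _ => by
    rw [Matrix.trace_mul_cycle, Matrix.mul_assoc]

private lemma psd_outer' {n : Type*} [Fintype n] (x : n → ℂ) :
    (Matrix.vecMulVec x (star x)).PosSemidef := by
  refine Matrix.PosSemidef.of_dotProduct_mulVec_nonneg ?_ ?_
  · ext i j
    simp [Matrix.conjTranspose_apply, Matrix.vecMulVec_apply, mul_comm]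
  · intro y
    have h1 : Matrix.vecMulVec x (star x) *ᵥ y = (star x ⬝ᵥ y) • x := by
      ext i
      simp [Matrix.mulVec, Matrix.vecMulVec_apply, dotProduct, Finset.mul_sum, mul_comm,
        mul_assoc, mul_left_comm]
    rw [h1]
    have h2 : star y ⬝ᵥ (star x ⬝ᵥ y) • x = star (star x ⬝ᵥ y) * (star x ⬝ᵥ y) := by
      rw [dotProduct_smul]
      simp only [smul_eq_mul]
      rw [mul_comm]
      congr 1
      simp [dotProduct, star_sum, mul_comm]
    rw [h2]
    exact star_mul_self_nonneg _

private lemma psd_smul_real' {n : Type*} [Fintype n] {M : Matrix n n ℂ}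
    (hM : M.PosSemidef) {r : ℝ} (hr : 0 ≤ r) : ((r : ℂ) • M).PosSemidef := by
  refine Matrix.PosSemidef.of_dotProduct_mulVec_nonneg ?_ ?_
  · ext i j
    have := congrFun (congrFun hM.1 i) j
    simp only [Matrix.conjTranspose_apply, Matrix.smul_apply, star_mul'] at *
    simp [this, Complex.conj_ofReal]
  · intro y
    rw [Matrix.smul_mulVec, dotProduct_smul]
    have := hM.dotProduct_mulVec_nonneg y
    exact smul_nonneg (by exact_mod_cast Complex.zero_le_real.mpr hr) this

private lemma trace_mul_outer' {n : Type*} [Fintype n] (M : Matrix n n ℂ) (x : n → ℂ) :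
    (M * Matrix.vecMulVec x (star x)).trace = star x ⬝ᵥ M *ᵥ x := by
  simp only [Matrix.trace, Matrix.diag, Matrix.mul_apply, Matrix.vecMulVec_apply,
    dotProduct, Matrix.mulVec, Pi.star_apply]
  refine Finset.sum_congr rfl fun i _ => ?_
  rw [Finset.mul_sum]
  refine Finset.sum_congr rfl fun j _ => by ring

private lemma dot_star_self' {n : Type*} [Fintype n] (x : n → ℂ) :
    star x ⬝ᵥ x = ((∑ i, ‖x i‖ ^ 2 : ℝ) : ℂ) := by
  simp only [dotProduct, Pi.star_apply]
  push_cast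
  refine Finset.sum_congr rfl fun i _ => ?_
  rw [mul_comm]
  exact_mod_cast Complex.mul_conj' (x i)

end Helpers

/-- operations `Φ` and `Ψ` are coexistent iff there is a finite family of
operators `{X_j}` with `∑ⱼ Xⱼ* Xⱼ = I` and index subsets `J₁, J₂` realizing `Φ` and `Ψ`;
moreover the family can be chosen with at most `3d² + 1` elements. -/
theorem stmt9 (d : ℕ) (Φ Ψ : Matrix (Fin d) (Fin d) ℂ → Matrix (Fin d) (Fin d) ℂ)
    (hΦ : IsOperation Φ) (hΨ : IsOperation Ψ) :
    Coexistent4 Φ Ψ ↔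
      ∃ (m : ℕ), m ≤ 3 * d ^ 2 + 1 ∧
        ∃ (X : Fin m → Matrix (Fin d) (Fin d) ℂ) (J₁ J₂ : Finset (Fin m)),
          (∀ ρ, Φ ρ = ∑ j ∈ J₁, X j * ρ * (X j)ᴴ) ∧
          (∀ ρ, Ψ ρ = ∑ j ∈ J₂, X j * ρ * (X j)ᴴ) ∧
          (∑ j, (X j)ᴴ * X j) = (1 : Matrix (Fin d) (Fin d) ℂ) := by
  classical
  constructor
  · rintro ⟨K₁, K₂, K₃, K₄, c₁, c₂, c₃, c₄, htr, hφ, hψ⟩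
    obtain ⟨m₁, Z₁, hZ₁⟩ := c₁
    obtain ⟨m₂, Z₂, hZ₂⟩ := c₂
    obtain ⟨m₃, Z₃, hZ₃⟩ := c₃
    obtain ⟨m₄, Z₄, hZ₄⟩ := c₄
    obtain ⟨Y₁, hY₁, hS₁⟩ := kraus_compress' d m₁ Z₁
    obtain ⟨Y₂, hY₂, hS₂⟩ := kraus_compress' d m₂ Z₂
    obtain ⟨Y₃, hY₃, hS₃⟩ := kraus_compress' d m₃ Z₃
    set S : Matrix (Fin d) (Fin d) ℂ :=
      (∑ i, (Y₁ i)ᴴ * Y₁ i) + ((∑ i, (Y₂ i)ᴴ * Y₂ i) + (∑ i, (Y₃ i)ᴴ * Y₃ i)) with hS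
    set S₄ : Matrix (Fin d) (Fin d) ℂ := ∑ k, (Z₄ k)ᴴ * Z₄ k with hS4
    have hpsd_sum : ∀ (N : ℕ) (W : Fin N → Matrix (Fin d) (Fin d) ℂ),
        (∑ i, (W i)ᴴ * W i).PosSemidef := by
      intro N W
      refine Finset.sum_induction _ _ (fun a b ha hb => ha.add hb)
        Matrix.PosSemidef.zero (fun i _ => Matrix.posSemidef_conjTranspose_mul_self (W i))
    have hSpsd : S.PosSemidef :=
      ((hpsd_sum _ Y₁).add ((hpsd_sum _ Y₂).add (hpsd_sum _ Y₃)))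
    have hS4psd : S₄.PosSemidef := hpsd_sum _ Z₄
    have quad : ∀ x : Fin d → ℂ, star x ⬝ᵥ ((S + S₄) *ᵥ x) = star x ⬝ᵥ x := by
      intro x
      by_cases hx : x = 0
      · simp [hx]
      · set t : ℝ := ∑ i, ‖x i‖ ^ 2 with ht
        have ht0 : 0 < t := by
          have hex : ∃ i, x i ≠ 0 := by
            by_contra h; push_neg at h; exact hx (funext fun i => h i)
          obtain ⟨i, hi⟩ := hex
          have h1 : (0:ℝ) < ‖x i‖ ^ 2 := pow_pos (norm_pos_iff.mpr hi) 2
          exact lt_of_lt_of_le h1 (Finset.single_le_sum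
            (f := fun i => ‖x i‖ ^ 2) (fun j _ => by positivity) (Finset.mem_univ i))
        have htrv : (Matrix.vecMulVec x (star x)).trace = (t : ℂ) := by
          rw [← dot_star_self' x]
          simp [Matrix.trace, Matrix.diag, Matrix.vecMulVec_apply, dotProduct, mul_comm]
        set ρ : Matrix (Fin d) (Fin d) ℂ :=
          ((t⁻¹ : ℝ) : ℂ) • Matrix.vecMulVec x (star x) with hρdef
        have hρ : IsDensity ρ := by
          constructor
          · exact psd_smul_real' (psd_outer' x) (inv_nonneg.mpr ht0.le)
          · rw [hρdef, Matrix.trace_smul, htrv, smul_eq_mul]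
            rw [← Complex.ofReal_mul, inv_mul_cancel₀ (ne_of_gt ht0), Complex.ofReal_one]
        have h1 := htr ρ hρ
        rw [hZ₁ ρ, hY₁ ρ, hZ₂ ρ, hY₂ ρ, hZ₃ ρ, hY₃ ρ, hZ₄ ρ] at h1
        rw [Matrix.trace_add, Matrix.trace_add, Matrix.trace_add] at h1
        rw [trace_kraus' Y₁ Finset.univ ρ, trace_kraus' Y₂ Finset.univ ρ,
          trace_kraus' Y₃ Finset.univ ρ, trace_kraus' Z₄ Finset.univ ρ] at h1
        rw [← Matrix.trace_add, ← Matrix.trace_add, ← Matrix.trace_add,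
          ← Matrix.add_mul, ← Matrix.add_mul, ← Matrix.add_mul] at h1
        have hcomb : (∑ j, (Y₁ j)ᴴ * Y₁ j) + (∑ j, (Y₂ j)ᴴ * Y₂ j)
            + (∑ j, (Y₃ j)ᴴ * Y₃ j) + (∑ j, (Z₄ j)ᴴ * Z₄ j) = S + S₄ := by
          rw [hS, hS4]; abel
        rw [hcomb] at h1
        rw [hρdef, Matrix.mul_smul, Matrix.trace_smul, trace_mul_outer'] at h1
        have h2 : star x ⬝ᵥ (S + S₄) *ᵥ x = (t : ℂ) := by
          have htne : ((t⁻¹ : ℝ) : ℂ) ≠ 0 := by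
            simp only [ne_eq, Complex.ofReal_eq_zero]
            exact inv_ne_zero (ne_of_gt ht0)
          have h3 := congrArg (fun z => ((t : ℝ) : ℂ) * z) h1
          simp only [smul_eq_mul, mul_one] at h3
          rw [← mul_assoc, ← Complex.ofReal_mul, mul_inv_cancel₀ (ne_of_gt ht0),
            Complex.ofReal_one, one_mul] at h3
          exact h3
        rw [h2, dot_star_self' x]
    have h1S : ((1 : Matrix (Fin d) (Fin d) ℂ) - S).PosSemidef := by
      refine Matrix.PosSemidef.of_dotProduct_mulVec_nonneg ?_ ?_
      · exact (Matrix.isHermitian_one).sub hSpsd.1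
      · intro x
        have hq := quad x
        rw [Matrix.add_mulVec, dotProduct_add] at hq
        have h4 : star x ⬝ᵥ ((1 - S) *ᵥ x) = star x ⬝ᵥ S₄ *ᵥ x := by
          rw [Matrix.sub_mulVec, dotProduct_sub, Matrix.one_mulVec]
          linear_combination -hq
        rw [h4]
        exact hS4psd.dotProduct_mulVec_nonneg x
    obtain ⟨B₀, hB₀⟩ := psd_eq_conjTranspose_mul_self' h1S
    refine ⟨d * d + d * d + d * d + 1, le_of_eq (by ring), ?_⟩
    set X : Fin (d * d + d * d + d * d + 1) → Matrix (Fin d) (Fin d) ℂ :=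
      Fin.append (Fin.append (Fin.append Y₁ Y₂) Y₃) (fun _ : Fin 1 => B₀) with hX
    have inj1 : Function.Injective
        (fun i : Fin (d * d) => Fin.castAdd 1 (Fin.castAdd (d * d) (Fin.castAdd (d * d) i))) := by
      intro i j h
      have := congrArg Fin.val h
      simp only [Fin.coe_castAdd] at this
      exact Fin.ext this
    have inj2 : Function.Injective
        (fun i : Fin (d * d) => Fin.castAdd 1 (Fin.castAdd (d * d) (Fin.natAdd (d * d) i))) := by
      intro i j h
      have := congrArg Fin.val h
      simp only [Fin.coe_castAdd, Fin.coe_natAdd] at this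
      exact Fin.ext (by omega)
    have inj3 : Function.Injective
        (fun i : Fin (d * d) => Fin.castAdd 1 (Fin.natAdd (d * d + d * d) i)) := by
      intro i j h
      have := congrArg Fin.val h
      simp only [Fin.coe_castAdd, Fin.coe_natAdd] at this
      exact Fin.ext (by omega)
    set e₁ : Fin (d * d) ↪ Fin (d * d + d * d + d * d + 1) := ⟨_, inj1⟩ with he₁
    set e₂ : Fin (d * d) ↪ Fin (d * d + d * d + d * d + 1) := ⟨_, inj2⟩ with he₂
    set e₃ : Fin (d * d) ↪ Fin (d * d + d * d + d * d + 1) := ⟨_, inj3⟩ with he₃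
    have hdis12 : Disjoint (Finset.univ.map e₁) (Finset.univ.map e₂) := by
      rw [Finset.disjoint_left]
      rintro a ha hb
      obtain ⟨i, -, hi⟩ := Finset.mem_map.mp ha
      obtain ⟨j, -, hj⟩ := Finset.mem_map.mp hb
      have := congrArg Fin.val (hi.trans hj.symm)
      simp only [he₁, he₂, Function.Embedding.coeFn_mk, Fin.coe_castAdd,
        Fin.coe_natAdd] at this
      omega
    have hdis13 : Disjoint (Finset.univ.map e₁) (Finset.univ.map e₃) := by
      rw [Finset.disjoint_left]
      rintro a ha hb
      obtain ⟨i, -, hi⟩ := Finset.mem_map.mp ha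
      obtain ⟨j, -, hj⟩ := Finset.mem_map.mp hb
      have := congrArg Fin.val (hi.trans hj.symm)
      simp only [he₁, he₃, Function.Embedding.coeFn_mk, Fin.coe_castAdd,
        Fin.coe_natAdd] at this
      omega
    have hXe₁ : ∀ i, X (e₁ i) = Y₁ i := by
      intro i
      simp only [hX, he₁, Function.Embedding.coeFn_mk, Fin.append_left]
    have hXe₂ : ∀ i, X (e₂ i) = Y₂ i := by
      intro i
      simp only [hX, he₂, Function.Embedding.coeFn_mk, Fin.append_left, Fin.append_right]
    have hXe₃ : ∀ i, X (e₃ i) = Y₃ i := by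
      intro i
      simp only [hX, he₃, Function.Embedding.coeFn_mk, Fin.append_left, Fin.append_right]
    refine ⟨X, (Finset.univ.map e₁) ∪ (Finset.univ.map e₂),
      (Finset.univ.map e₁) ∪ (Finset.univ.map e₃), ?_, ?_, ?_⟩
    · intro ρ
      rw [hφ ρ, hZ₁ ρ, hY₁ ρ, hZ₂ ρ, hY₂ ρ, Finset.sum_union hdis12,
        Finset.sum_map, Finset.sum_map]
      congr 1
      · exact Finset.sum_congr rfl fun i _ => by rw [hXe₁ i]
      · exact Finset.sum_congr rfl fun i _ => by rw [hXe₂ i]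
    · intro ρ
      rw [hψ ρ, hZ₁ ρ, hY₁ ρ, hZ₃ ρ, hY₃ ρ, Finset.sum_union hdis13,
        Finset.sum_map, Finset.sum_map]
      congr 1
      · exact Finset.sum_congr rfl fun i _ => by rw [hXe₁ i]
      · exact Finset.sum_congr rfl fun i _ => by rw [hXe₃ i]
    · rw [Fin.sum_univ_add, Fin.sum_univ_add, Fin.sum_univ_add]
      have e1 : ∀ i : Fin (d * d),
          X (Fin.castAdd 1 (Fin.castAdd (d * d) (Fin.castAdd (d * d) i))) = Y₁ i := hXe₁
      simp only [hX, Fin.append_left, Fin.append_right]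
      rw [Finset.sum_const, Finset.card_univ, Fintype.card_fin, one_smul]
      rw [← hB₀, hS]
      abel
  · rintro ⟨m, hm, X, J₁, J₂, hΦk, hΨk, hsum⟩
    have hsplit : ∀ (s t : Finset (Fin m)) (f : Fin m → Matrix (Fin d) (Fin d) ℂ),
        (∑ j ∈ s ∩ t, f j) + (∑ j ∈ s \ t, f j) = ∑ j ∈ s, f j := by
      intro s t f
      rw [add_comm, ← Finset.sum_union (Finset.disjoint_sdiff_inter s t),
        Finset.sdiff_union_inter]
    have hkey : ∀ (f : Fin m → Matrix (Fin d) (Fin d) ℂ),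
        (∑ j ∈ J₁ ∩ J₂, f j) + (∑ j ∈ J₁ \ J₂, f j) + (∑ j ∈ J₂ \ J₁, f j)
          + (∑ j ∈ (J₁ ∪ J₂)ᶜ, f j) = ∑ j, f j := by
      intro f
      rw [hsplit J₁ J₂ f]
      have h2 : (∑ j ∈ J₁, f j) + (∑ j ∈ J₂ \ J₁, f j) = ∑ j ∈ J₁ ∪ J₂, f j := by
        rw [← Finset.sum_union Finset.disjoint_sdiff, Finset.union_sdiff_self_eq_union]
      rw [h2, Finset.sum_add_sum_compl]
    refine ⟨fun ρ => ∑ j ∈ J₁ ∩ J₂, X j * ρ * (X j)ᴴ,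
        fun ρ => ∑ j ∈ J₁ \ J₂, X j * ρ * (X j)ᴴ,
        fun ρ => ∑ j ∈ J₂ \ J₁, X j * ρ * (X j)ᴴ,
        fun ρ => ∑ j ∈ (J₁ ∪ J₂)ᶜ, X j * ρ * (X j)ᴴ,
        isCP_finset_sum' X _, isCP_finset_sum' X _, isCP_finset_sum' X _,
        isCP_finset_sum' X _, ?_, ?_, ?_⟩
    · intro ρ hρ
      rw [hkey (fun j => X j * ρ * (X j)ᴴ), trace_kraus' X Finset.univ ρ, hsum,
        Matrix.one_mul]
      exact hρ.2
    · intro ρ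
      rw [hΦk ρ, ← hsplit J₁ J₂ (fun j => X j * ρ * (X j)ᴴ)]
    · intro ρ
      rw [hΨk ρ, ← hsplit J₂ J₁ (fun j => X j * ρ * (X j)ᴴ), Finset.inter_comm]
end

section
/- Two operations Φ and Ψ on ℂ^d are coexistent if and only if there exists a density matrix Ω on ℂ^d ⊗ ℂ^d with d·tr₁[Ω] = I admitting a decomposition Ω = Ξ₁ + Ξ₂ + Ξ₃ + Ξ₄ into four positive semidefinite operators such that Ξ_Φ = Ξ₁ + Ξ₂ and Ξ_Ψ = Ξ₁ + Ξ₃, where Ξ_Φ, Ξ_Ψ are the Choi–Jamiolkowski operators of Φ and Ψ. -/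
open Matrix Kronecker
open scoped ComplexOrder

section Aux
variable {d : ℕ}

lemma mul_mul_conjTranspose_apply (X ρ : Matrix (Fin d) (Fin d) ℂ) (a c : Fin d) :
    (X * ρ * Xᴴ) a c = ∑ b, ∑ e, X a b * ρ b e * star (X c e) := by
  simp [Matrix.mul_apply, Matrix.conjTranspose_apply, Finset.sum_mul, Finset.mul_sum]
  rw [Finset.sum_comm]

lemma choi_apply (Φ : Matrix (Fin d) (Fin d) ℂ → Matrix (Fin d) (Fin d) ℂ)
    (a b c e : Fin d) :
    Choi Φ (a, b) (c, e) = (d : ℂ)⁻¹ * Φ (Matrix.single b e 1) a c := by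
  simp [Choi, Matrix.sum_apply, Matrix.kroneckerMap_apply, Matrix.single,
    Matrix.of_apply, mul_ite, mul_one, mul_zero, ite_and, Finset.sum_ite_eq, Finset.sum_ite_eq']

/-- A Kraus map is determined by its values on the standard basis matrices. -/
lemma kraus_expand {m : ℕ} (X : Fin m → Matrix (Fin d) (Fin d) ℂ)
    (Φ : Matrix (Fin d) (Fin d) ℂ → Matrix (Fin d) (Fin d) ℂ)
    (hΦ : ∀ ρ, Φ ρ = ∑ k, X k * ρ * (X k)ᴴ) (ρ : Matrix (Fin d) (Fin d) ℂ) (a c : Fin d) :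
    Φ ρ a c = ∑ b, ∑ e, Φ (Matrix.single b e 1) a c * ρ b e := by
  simp only [hΦ, Matrix.sum_apply, mul_mul_conjTranspose_apply]
  rw [Finset.sum_comm]
  refine Finset.sum_congr rfl fun b _ => ?_
  rw [Finset.sum_comm (γ := Fin m)]
  refine Finset.sum_congr rfl fun e _ => ?_
  simp [Finset.sum_mul, Matrix.single, mul_ite, ite_and, Finset.sum_ite_eq,
    Finset.sum_ite_eq']
  ring_nf
  refine Finset.sum_congr rfl fun k _ => by ring

/-- Two Kraus maps with the same Choi matrix are equal. -/
lemma choi_inj (hd : 0 < d) {m m' : ℕ} (X : Fin m → Matrix (Fin d) (Fin d) ℂ)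
    (X' : Fin m' → Matrix (Fin d) (Fin d) ℂ)
    (Φ Φ' : Matrix (Fin d) (Fin d) ℂ → Matrix (Fin d) (Fin d) ℂ)
    (hΦ : ∀ ρ, Φ ρ = ∑ k, X k * ρ * (X k)ᴴ)
    (hΦ' : ∀ ρ, Φ' ρ = ∑ k, X' k * ρ * (X' k)ᴴ)
    (h : Choi Φ = Choi Φ') (ρ : Matrix (Fin d) (Fin d) ℂ) : Φ ρ = Φ' ρ := by
  have hd0 : ((d : ℂ))⁻¹ ≠ 0 := by
    simp [Nat.cast_ne_zero]; omega
  ext a c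
  rw [kraus_expand X Φ hΦ, kraus_expand X' Φ' hΦ']
  refine Finset.sum_congr rfl fun b _ => Finset.sum_congr rfl fun e _ => ?_
  have := congrFun (congrFun h (a, b)) (c, e)
  rw [choi_apply, choi_apply] at this
  exact congrArg (· * ρ b e) (mul_left_cancel₀ hd0 this)

end Aux
section Aux2
variable {d : ℕ}

lemma kraus_on_basis {m : ℕ} (X : Fin m → Matrix (Fin d) (Fin d) ℂ) (a b c' e : Fin d) :
    (∑ k, X k * Matrix.single b e 1 * (X k)ᴴ : Matrix (Fin d) (Fin d) ℂ) a c' =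
      ∑ k, X k a b * star (X k c' e) := by
  simp only [Matrix.sum_apply, mul_mul_conjTranspose_apply]
  refine Finset.sum_congr rfl fun k _ => ?_
  simp [Matrix.single, mul_ite, ite_and, Finset.sum_ite_eq, Finset.sum_ite_eq']

lemma choi_psd {m : ℕ} (X : Fin m → Matrix (Fin d) (Fin d) ℂ)
    (Φ : Matrix (Fin d) (Fin d) ℂ → Matrix (Fin d) (Fin d) ℂ)
    (hΦ : ∀ ρ, Φ ρ = ∑ k, X k * ρ * (X k)ᴴ) : (Choi Φ).PosSemidef := by
  classical
  set c : ℂ := (((Real.sqrt d)⁻¹ : ℝ) : ℂ) with hcdef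
  have hc : star c * c = (d : ℂ)⁻¹ := by
    have h2 : (Real.sqrt d) * (Real.sqrt d) = (d : ℝ) := Real.mul_self_sqrt (by positivity)
    rw [hcdef, Complex.star_def, Complex.conj_ofReal, ← Complex.ofReal_mul, ← mul_inv, h2]
    simp
  have key : Choi Φ = (Matrix.of fun (k : Fin m) (p : Fin d × Fin d) =>
      c * star (X k p.1 p.2))ᴴ * (Matrix.of fun (k : Fin m) (p : Fin d × Fin d) =>
      c * star (X k p.1 p.2)) := by
    ext ⟨a, b⟩ ⟨c', e⟩
    rw [choi_apply, hΦ, kraus_on_basis]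
    simp only [Matrix.mul_apply, Matrix.conjTranspose_apply, Matrix.of_apply, star_mul',
      star_star, Finset.mul_sum]
    refine Finset.sum_congr rfl fun k _ => ?_
    rw [← hc]; ring
  rw [key]
  exact Matrix.posSemidef_conjTranspose_mul_self _

/-- Concatenation of two Kraus families. -/
lemma kraus_add {m m' : ℕ} (X : Fin m → Matrix (Fin d) (Fin d) ℂ)
    (X' : Fin m' → Matrix (Fin d) (Fin d) ℂ) :
    ∃ Z : Fin (m + m') → Matrix (Fin d) (Fin d) ℂ, ∀ ρ,
      (∑ k, X k * ρ * (X k)ᴴ) + (∑ k, X' k * ρ * (X' k)ᴴ) = ∑ k, Z k * ρ * (Z k)ᴴ := by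
  refine ⟨Fin.append X X', fun ρ => ?_⟩
  rw [Fin.sum_univ_add]
  simp [Fin.append_left, Fin.append_right]
end Aux2
section Aux3
variable {d : ℕ}

lemma vecMulVec_psd (v : Fin d → ℂ) : (Matrix.vecMulVec v (star v)).PosSemidef := by
  have : Matrix.vecMulVec v (star v) =
      (Matrix.of fun (_ : Fin 1) (j : Fin d) => star (v j))ᴴ *
      (Matrix.of fun (_ : Fin 1) (j : Fin d) => star (v j)) := by
    ext i j
    simp [Matrix.mul_apply, Matrix.vecMulVec_apply, Matrix.conjTranspose_apply]
  rw [this]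
  exact Matrix.posSemidef_conjTranspose_mul_self _

lemma sum_ite_two {j k : Fin d} (hjk : j ≠ k) (a b : Fin d → ℂ) :
    (∑ i, (if i = j then a i else if i = k then b i else 0)) = a j + b k := by
  have : ∀ i : Fin d, (if i = j then a i else if i = k then b i else 0) =
      (if i = j then a i else 0) + (if i = k then b i else 0) := by
    intro i; split_ifs with h1 h2 <;> simp_all
  simp [this, Finset.sum_add_distrib, Finset.sum_ite_eq']

lemma trace_mul_vecMulVec (C : Matrix (Fin d) (Fin d) ℂ) (v : Fin d → ℂ) :
    (C * Matrix.vecMulVec v (star v)).trace = ∑ i, ∑ m, star (v i) * C i m * v m := by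
  simp only [Matrix.trace, Matrix.diag_apply, Matrix.mul_apply, Matrix.vecMulVec_apply,
    Pi.star_apply]
  refine Finset.sum_congr rfl fun i _ => Finset.sum_congr rfl fun m _ => by ring

lemma quad_form (C : Matrix (Fin d) (Fin d) ℂ) {j k : Fin d} (hjk : j ≠ k) (z w : ℂ) :
    (∑ i, ∑ m, star ((fun i => if i = j then z else if i = k then w else 0) i) * C i m *
        ((fun i => if i = j then z else if i = k then w else 0) m)) =
      star z * C j j * z + star z * C j k * w + star w * C k j * z + star w * C k k * w := by
  have step1 : ∀ i : Fin d,
      (∑ m, star ((fun i => if i = j then z else if i = k then w else 0) i) * C i m *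
        ((fun i => if i = j then z else if i = k then w else 0) m)) =
      star ((fun i => if i = j then z else if i = k then w else 0) i) * C i j * z +
      star ((fun i => if i = j then z else if i = k then w else 0) i) * C i k * w := by
    intro i
    have e : ∀ m : Fin d,
        star ((fun i => if i = j then z else if i = k then w else 0) i) * C i m *
          ((fun i => if i = j then z else if i = k then w else 0) m) =
        (if m = j then
          (fun m => star ((fun i => if i = j then z else if i = k then w else 0) i) * C i m * z) m
         else if m = k then
          (fun m => star ((fun i => if i = j then z else if i = k then w else 0) i) * C i m * w) m
         else 0) := by
      intro m; simp only; split_ifs with h1 h2 <;> simp_all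
    rw [Finset.sum_congr rfl fun m _ => e m, sum_ite_two hjk]
  rw [Finset.sum_congr rfl fun i _ => step1 i]
  have e : ∀ i : Fin d,
      (star ((fun i => if i = j then z else if i = k then w else 0) i) * C i j * z +
       star ((fun i => if i = j then z else if i = k then w else 0) i) * C i k * w) =
      (if i = j then (fun i => star z * C i j * z + star z * C i k * w) i
       else if i = k then (fun i => star w * C i j * z + star w * C i k * w) i else 0) := by
    intro i; simp only; split_ifs with h1 h2 <;> simp_all
  rw [Finset.sum_congr rfl fun i _ => e i, sum_ite_two hjk]
  ring

lemma norm_two_vec {j k : Fin d} (hjk : j ≠ k) {z w : ℂ}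
    (hzw : z * star z + w * star w = 1) :
    (∑ i, (fun i => if i = j then z else if i = k then w else 0) i *
        star ((fun i => if i = j then z else if i = k then w else 0) i)) = 1 := by
  have e : ∀ i : Fin d,
      ((fun i => if i = j then z else if i = k then w else 0) i *
        star ((fun i => if i = j then z else if i = k then w else 0) i)) =
      (if i = j then (fun _ => z * star z) i else if i = k then (fun _ => w * star w) i
       else 0) := by
    intro i; simp only; split_ifs with h1 h2 <;> simp_all
  rw [Finset.sum_congr rfl fun i _ => e i, sum_ite_two hjk]
  exact hzw

lemma trace_density_eq_one (C : Matrix (Fin d) (Fin d) ℂ)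
    (h : ∀ ρ, IsDensity ρ → (C * ρ).trace = 1) : C = 1 := by
  classical
  have key : ∀ v : Fin d → ℂ, (∑ i, v i * star (v i)) = 1 →
      (∑ i, ∑ m, star (v i) * C i m * v m) = 1 := by
    intro v hv
    have hden : IsDensity (Matrix.vecMulVec v (star v)) := by
      refine ⟨vecMulVec_psd v, ?_⟩
      simpa [Matrix.trace, Matrix.vecMulVec_apply] using hv
    have := h _ hden
    rwa [trace_mul_vecMulVec] at this
  have diag : ∀ j : Fin d, C j j = 1 := by
    intro j
    have := key (fun i => if i = j then 1 else 0) (by simp)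
    simpa [apply_ite, mul_ite, ite_mul, Finset.sum_ite_eq', Finset.sum_ite_eq] using this
  have offdiag : ∀ j k : Fin d, j ≠ k → C j k = 0 := by
    intro j k hjk
    set c : ℂ := (((Real.sqrt 2)⁻¹ : ℝ) : ℂ) with hcdef
    have hsc : star c = c := by rw [hcdef, Complex.star_def, Complex.conj_ofReal]
    have hc2 : c * c = 2⁻¹ := by
      have h2 : (Real.sqrt 2) * (Real.sqrt 2) = (2 : ℝ) := Real.mul_self_sqrt (by norm_num)
      rw [hcdef, ← Complex.ofReal_mul, ← mul_inv, h2]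
      norm_num
    have hsI : star (c * Complex.I) = -(c * Complex.I) := by
      rw [star_mul', hsc, Complex.star_def, Complex.conj_I]; ring
    have q1 := key _ (norm_two_vec hjk (z := c) (w := c)
      (by rw [hsc]; linear_combination 2 * hc2))
    rw [quad_form C hjk c c, hsc, diag j, diag k] at q1
    have q2 := key _ (norm_two_vec hjk (z := c) (w := c * Complex.I)
      (by rw [hsI, hsc]; linear_combination 2 * hc2 - (c * c) * Complex.I_sq))
    rw [quad_form C hjk c (c * Complex.I), hsI, hsc, diag j, diag k] at q2
    have e1 : C j k + C k j = 0 := by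
      linear_combination 2 * q1 - 2 * (2 + C j k + C k j) * hc2
    have e2 : Complex.I * (C j k - C k j) = 0 := by
      linear_combination 2 * q2 -
        2 * (1 + Complex.I * C j k - Complex.I * C k j - Complex.I ^ 2) * hc2 + Complex.I_sq
    have e3 : C j k - C k j = 0 := by
      linear_combination (-Complex.I) * e2 + (C j k - C k j) * Complex.I_sq
    linear_combination (e1 + e3) / 2
  ext j k
  by_cases hjk : j = k
  · subst hjk; simp [diag]
  · simp [Matrix.one_apply, hjk, offdiag j k hjk]
end Aux3
section Aux4
variable {d : ℕ}

lemma exists_kraus_of_psd (Ξ : Matrix (Fin d × Fin d) (Fin d × Fin d) ℂ)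
    (hΞ : Ξ.PosSemidef) :
    ∃ (m : ℕ) (X : Fin m → Matrix (Fin d) (Fin d) ℂ),
      ∀ ρ (a c : Fin d), (∑ k, X k * ρ * (X k)ᴴ : Matrix (Fin d) (Fin d) ℂ) a c =
        (d : ℂ) * ∑ b, ∑ e, Ξ (a, b) (c, e) * ρ b e := by
  obtain ⟨B, hB⟩ : ∃ B : Matrix (Fin d × Fin d) (Fin d × Fin d) ℂ, Ξ = Bᴴ * B := by
    open scoped MatrixOrder Matrix.Norms.L2Operator in
    exact CStarAlgebra.nonneg_iff_eq_star_mul_self.mp hΞ.nonneg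
  set c0 : ℂ := ((Real.sqrt d : ℝ) : ℂ) with hc0
  have hcc : c0 * star c0 = (d : ℂ) := by
    have h2 : (Real.sqrt d) * (Real.sqrt d) = (d : ℝ) := Real.mul_self_sqrt (by positivity)
    rw [hc0, Complex.star_def, Complex.conj_ofReal, ← Complex.ofReal_mul, h2]
    push_cast
    ring
  refine ⟨d * d, fun r => Matrix.of fun a b =>
    c0 * star (B (finProdFinEquiv.symm r) (a, b)), fun ρ a c => ?_⟩
  simp only [Matrix.sum_apply, mul_mul_conjTranspose_apply, Matrix.of_apply]
  rw [Finset.sum_comm]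
  rw [Finset.mul_sum]
  refine Finset.sum_congr rfl fun b _ => ?_
  rw [Finset.sum_comm, Finset.mul_sum]
  refine Finset.sum_congr rfl fun e _ => ?_
  have hXi : Ξ (a, b) (c, e) = ∑ p : Fin d × Fin d, star (B p (a, b)) * B p (c, e) := by
    rw [hB]
    simp [Matrix.mul_apply, Matrix.conjTranspose_apply]
  have reidx : ∑ k : Fin (d * d),
      (c0 * star (B (finProdFinEquiv.symm k) (a, b))) * ρ b e *
        star (c0 * star (B (finProdFinEquiv.symm k) (c, e))) =
      ∑ p : Fin d × Fin d, (c0 * star (B p (a, b))) * ρ b e * star (c0 * star (B p (c, e))) :=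
    Equiv.sum_comp finProdFinEquiv.symm
      (fun p => (c0 * star (B p (a, b))) * ρ b e * star (c0 * star (B p (c, e))))
  rw [reidx, hXi, Finset.sum_mul, Finset.mul_sum]
  refine Finset.sum_congr rfl fun p _ => ?_
  rw [← hcc]
  simp only [star_mul', star_star]
  ring
end Aux4
section Extra
variable {d : ℕ}

lemma trace_stdBasis (i j : Fin d) :
    (Matrix.single i j (1 : ℂ)).trace = if i = j then 1 else 0 := by
  simp [Matrix.trace, Matrix.diag, Matrix.single, ite_and, Finset.sum_ite_eq,
    eq_comm]

lemma choi_eq_of_entries (hd : 0 < d) (Ξ : Matrix (Fin d × Fin d) (Fin d × Fin d) ℂ)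
    (J : Matrix (Fin d) (Fin d) ℂ → Matrix (Fin d) (Fin d) ℂ)
    (hJ : ∀ ρ (a c : Fin d), J ρ a c = (d : ℂ) * ∑ b, ∑ e, Ξ (a, b) (c, e) * ρ b e) :
    Choi J = Ξ := by
  have hd0 : ((d : ℂ)) ≠ 0 := by simp [Nat.cast_ne_zero]; omega
  ext ⟨a, b⟩ ⟨c, e⟩
  rw [choi_apply, hJ]
  have : (∑ b', ∑ e', Ξ (a, b') (c, e') * (Matrix.single b e 1 : Matrix (Fin d) (Fin d) ℂ) b' e')
      = Ξ (a, b) (c, e) := by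
    simp [Matrix.single, mul_ite, ite_and, Finset.sum_ite_eq, Finset.sum_ite_eq']
  rw [this, ← mul_assoc, inv_mul_cancel₀ hd0, one_mul]
end Extra
/-- operations `Φ` and `Ψ` are coexistent iff there is a state `Ω` on
`ℂ^d ⊗ ℂ^d` with `d·tr₁[Ω] = I` decomposing as `Ω = Ξ₁+Ξ₂+Ξ₃+Ξ₄` into positive operators
with `Ξ_Φ = Ξ₁+Ξ₂` and `Ξ_Ψ = Ξ₁+Ξ₃`. -/
theorem stmt10 (d : ℕ) (hd : 0 < d)
    (Φ Ψ : Matrix (Fin d) (Fin d) ℂ → Matrix (Fin d) (Fin d) ℂ)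
    (hΦ : IsOperation Φ) (hΨ : IsOperation Ψ) :
    Coexistent4 Φ Ψ ↔
      ∃ Ω : Matrix (Fin d × Fin d) (Fin d × Fin d) ℂ,
        IsDensity Ω ∧ (d : ℂ) • ptr1 Ω = 1 ∧
        ∃ Ξ₁ Ξ₂ Ξ₃ Ξ₄ : Matrix (Fin d × Fin d) (Fin d × Fin d) ℂ,
          Ξ₁.PosSemidef ∧ Ξ₂.PosSemidef ∧ Ξ₃.PosSemidef ∧ Ξ₄.PosSemidef ∧
          Ω = Ξ₁ + Ξ₂ + Ξ₃ + Ξ₄ ∧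
          Choi Φ = Ξ₁ + Ξ₂ ∧ Choi Ψ = Ξ₁ + Ξ₃ := by
  have hd0 : ((d : ℂ)) ≠ 0 := by simp [Nat.cast_ne_zero]; omega
  constructor
  · rintro ⟨J₁, J₂, J₃, J₄, ⟨m₁, X₁, h₁⟩, ⟨m₂, X₂, h₂⟩, ⟨m₃, X₃, h₃⟩, ⟨m₄, X₄, h₄⟩,
      htr, h12, h13⟩
    obtain ⟨Z12, hZ12⟩ := kraus_add X₁ X₂
    obtain ⟨Z34, hZ34⟩ := kraus_add X₃ X₄
    obtain ⟨Z, hZ⟩ := kraus_add Z12 Z34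
    set Λ : Matrix (Fin d) (Fin d) ℂ → Matrix (Fin d) (Fin d) ℂ :=
      fun ρ => J₁ ρ + J₂ ρ + J₃ ρ + J₄ ρ with hΛdef
    have hΛ : ∀ ρ, Λ ρ = ∑ k, Z k * ρ * (Z k)ᴴ := by
      intro ρ
      rw [hΛdef]
      simp only
      rw [h₁, h₂, h₃, h₄, add_assoc, hZ12, hZ34, hZ]
    have hCtr : ∀ A : Matrix (Fin d) (Fin d) ℂ,
        (Λ A).trace = ((∑ k, (Z k)ᴴ * Z k) * A).trace := by
      intro A
      rw [hΛ A, Matrix.trace_sum, Finset.sum_mul, Matrix.trace_sum]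
      refine Finset.sum_congr rfl fun k _ => ?_
      rw [Matrix.trace_mul_cycle, mul_assoc]
    have hC1 : (∑ k, (Z k)ᴴ * Z k) = 1 := by
      refine trace_density_eq_one _ fun ρ hρ => ?_
      rw [← hCtr ρ]
      exact htr ρ hρ
    have hΛtrace : ∀ A : Matrix (Fin d) (Fin d) ℂ, (Λ A).trace = A.trace := fun A => by
      rw [hCtr A, hC1, one_mul]
    refine ⟨Choi Λ, ⟨choi_psd Z Λ hΛ, ?_⟩, ?_, Choi J₁, Choi J₂, Choi J₃, Choi J₄,
      choi_psd X₁ J₁ h₁, choi_psd X₂ J₂ h₂, choi_psd X₃ J₃ h₃, choi_psd X₄ J₄ h₄, ?_, ?_, ?_⟩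
    · -- trace of Choi Λ = 1
      have : (Choi Λ).trace = ∑ a : Fin d, ∑ b : Fin d, Choi Λ (a, b) (a, b) := by
        rw [Matrix.trace, Fintype.sum_prod_type]
        rfl
      rw [this]
      have : ∀ a b : Fin d, Choi Λ (a, b) (a, b)
          = (d : ℂ)⁻¹ * Λ (Matrix.single b b 1) a a := fun a b => choi_apply Λ a b a b
      simp only [this]
      rw [Finset.sum_comm]
      have : ∀ b : Fin d, (∑ a : Fin d, (d : ℂ)⁻¹ * Λ (Matrix.single b b 1) a a)
          = (d : ℂ)⁻¹ := by
        intro b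
        rw [← Finset.mul_sum]
        have : (∑ a : Fin d, Λ (Matrix.single b b 1) a a)
            = (Λ (Matrix.single b b 1)).trace := rfl
        rw [this, hΛtrace, trace_stdBasis]
        simp
      simp only [this, Finset.sum_const, Finset.card_univ, Fintype.card_fin, nsmul_eq_mul]
      field_simp
    · -- d • ptr1 (Choi Λ) = 1
      ext i j
      have : ∀ k : Fin d, Choi Λ (k, i) (k, j)
          = (d : ℂ)⁻¹ * Λ (Matrix.single i j 1) k k := fun k => choi_apply Λ k i k j
      simp only [Matrix.smul_apply, ptr1, Matrix.of_apply, this, smul_eq_mul, ← Finset.mul_sum]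
      have : (∑ k : Fin d, Λ (Matrix.single i j 1) k k)
          = (Λ (Matrix.single i j 1)).trace := rfl
      rw [this, hΛtrace, trace_stdBasis, ← mul_assoc, mul_inv_cancel₀ hd0, one_mul,
        Matrix.one_apply]
    · -- Ω = Ξ₁ + Ξ₂ + Ξ₃ + Ξ₄
      ext ⟨a, b⟩ ⟨c, e⟩
      simp only [Matrix.add_apply, choi_apply, hΛdef]
      ring
    · -- Choi Φ = Choi J₁ + Choi J₂
      ext ⟨a, b⟩ ⟨c, e⟩
      simp only [Matrix.add_apply, choi_apply, h12]
      ring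
    · ext ⟨a, b⟩ ⟨c, e⟩
      simp only [Matrix.add_apply, choi_apply, h13]
      ring
  · rintro ⟨Ω, ⟨hΩpsd, hΩtr⟩, hptr, Ξ₁, Ξ₂, Ξ₃, Ξ₄, hΞ₁, hΞ₂, hΞ₃, hΞ₄, hΩeq, hCΦ, hCΨ⟩
    obtain ⟨m₁, X₁, hX₁⟩ := exists_kraus_of_psd Ξ₁ hΞ₁
    obtain ⟨m₂, X₂, hX₂⟩ := exists_kraus_of_psd Ξ₂ hΞ₂
    obtain ⟨m₃, X₃, hX₃⟩ := exists_kraus_of_psd Ξ₃ hΞ₃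
    obtain ⟨m₄, X₄, hX₄⟩ := exists_kraus_of_psd Ξ₄ hΞ₄
    obtain ⟨mΦ, XΦ, hXΦ⟩ := hΦ.1
    obtain ⟨mΨ, XΨ, hXΨ⟩ := hΨ.1
    obtain ⟨Z12, hZ12⟩ := kraus_add X₁ X₂
    obtain ⟨Z13, hZ13⟩ := kraus_add X₁ X₃
    -- entry formulas for the pairwise sums
    have h12ent : ∀ ρ (a c : Fin d),
        ((∑ k, X₁ k * ρ * (X₁ k)ᴴ) + (∑ k, X₂ k * ρ * (X₂ k)ᴴ) : Matrix (Fin d) (Fin d) ℂ) a c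
          = (d : ℂ) * ∑ b, ∑ e, (Ξ₁ + Ξ₂) (a, b) (c, e) * ρ b e := by
      intro ρ a c
      rw [Matrix.add_apply, hX₁, hX₂, ← mul_add, ← Finset.sum_add_distrib]
      congr 1
      refine Finset.sum_congr rfl fun b _ => ?_
      rw [← Finset.sum_add_distrib]
      refine Finset.sum_congr rfl fun e _ => ?_
      simp only [Matrix.add_apply]
      ring
    have h13ent : ∀ ρ (a c : Fin d),
        ((∑ k, X₁ k * ρ * (X₁ k)ᴴ) + (∑ k, X₃ k * ρ * (X₃ k)ᴴ) : Matrix (Fin d) (Fin d) ℂ) a c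
          = (d : ℂ) * ∑ b, ∑ e, (Ξ₁ + Ξ₃) (a, b) (c, e) * ρ b e := by
      intro ρ a c
      rw [Matrix.add_apply, hX₁, hX₃, ← mul_add, ← Finset.sum_add_distrib]
      congr 1
      refine Finset.sum_congr rfl fun b _ => ?_
      rw [← Finset.sum_add_distrib]
      refine Finset.sum_congr rfl fun e _ => ?_
      simp only [Matrix.add_apply]
      ring
    refine ⟨fun ρ => ∑ k, X₁ k * ρ * (X₁ k)ᴴ, fun ρ => ∑ k, X₂ k * ρ * (X₂ k)ᴴ,
      fun ρ => ∑ k, X₃ k * ρ * (X₃ k)ᴴ, fun ρ => ∑ k, X₄ k * ρ * (X₄ k)ᴴ,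
      ⟨m₁, X₁, fun ρ => rfl⟩, ⟨m₂, X₂, fun ρ => rfl⟩, ⟨m₃, X₃, fun ρ => rfl⟩,
      ⟨m₄, X₄, fun ρ => rfl⟩, ?_, ?_, ?_⟩
    · -- trace condition
      intro ρ hρ
      have key : ∀ b e : Fin d, (d : ℂ) * (∑ a, Ω (a, b) (a, e))
          = (1 : Matrix (Fin d) (Fin d) ℂ) b e := by
        intro b e
        have := congrFun (congrFun hptr b) e
        simpa [ptr1, Matrix.smul_apply, smul_eq_mul] using this
      have hsum4 : ∀ a c : Fin d,
          ((∑ k, X₁ k * ρ * (X₁ k)ᴴ : Matrix (Fin d) (Fin d) ℂ) a c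
            + (∑ k, X₂ k * ρ * (X₂ k)ᴴ : Matrix (Fin d) (Fin d) ℂ) a c
            + (∑ k, X₃ k * ρ * (X₃ k)ᴴ : Matrix (Fin d) (Fin d) ℂ) a c
            + (∑ k, X₄ k * ρ * (X₄ k)ᴴ : Matrix (Fin d) (Fin d) ℂ) a c)
          = (d : ℂ) * ∑ b, ∑ e, Ω (a, b) (c, e) * ρ b e := by
        intro a c
        rw [hX₁, hX₂, hX₃, hX₄, ← mul_add, ← mul_add, ← mul_add]
        congr 1
        rw [← Finset.sum_add_distrib, ← Finset.sum_add_distrib, ← Finset.sum_add_distrib]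
        refine Finset.sum_congr rfl fun b _ => ?_
        rw [← Finset.sum_add_distrib, ← Finset.sum_add_distrib, ← Finset.sum_add_distrib]
        refine Finset.sum_congr rfl fun e _ => ?_
        rw [hΩeq]
        simp only [Matrix.add_apply]
        ring
      have htr' : (∑ k, X₁ k * ρ * (X₁ k)ᴴ + ∑ k, X₂ k * ρ * (X₂ k)ᴴ
          + ∑ k, X₃ k * ρ * (X₃ k)ᴴ + ∑ k, X₄ k * ρ * (X₄ k)ᴴ
          : Matrix (Fin d) (Fin d) ℂ).trace
          = ∑ a, (d : ℂ) * ∑ b, ∑ e, Ω (a, b) (a, e) * ρ b e := by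
        rw [Matrix.trace]
        refine Finset.sum_congr rfl fun a _ => ?_
        rw [← hsum4 a a]
        simp [Matrix.add_apply]
      rw [htr']
      have swap : (∑ a : Fin d, (d : ℂ) * ∑ b, ∑ e, Ω (a, b) (a, e) * ρ b e)
          = ∑ b : Fin d, ∑ e : Fin d, ((d : ℂ) * ∑ a, Ω (a, b) (a, e)) * ρ b e := by
        simp only [Finset.mul_sum, Finset.sum_mul]
        rw [Finset.sum_comm]
        refine Finset.sum_congr rfl fun b _ => ?_
        rw [Finset.sum_comm]
        refine Finset.sum_congr rfl fun e _ => Finset.sum_congr rfl fun a _ => by ring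
      rw [swap]
      simp only [key, Matrix.one_apply, ite_mul, one_mul, zero_mul,
        Finset.sum_ite_eq, Finset.mem_univ, if_true]
      exact hρ.2
    · -- Φ = J₁ + J₂
      intro ρ
      exact choi_inj hd XΦ Z12 Φ _ hXΦ
        (fun ρ => by rw [← hZ12 ρ])
        (by rw [hCΦ, choi_eq_of_entries hd (Ξ₁ + Ξ₂) _ h12ent]) ρ
    · intro ρ
      exact choi_inj hd XΨ Z13 Ψ _ hXΨ
        (fun ρ => by rw [← hZ13 ρ])
        (by rw [hCΨ, choi_eq_of_entries hd (Ξ₁ + Ξ₃) _ h13ent]) ρ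
end

section
/- Let U be a unitary on ℂ^d and 𝒰(ρ) = UρU* the corresponding unitary channel. An operation Φ is coexistent with 𝒰 if and only if Φ = λ𝒰 for some 0 ≤ λ ≤ 1. -/
open Matrix Kronecker
open scoped ComplexOrder

open ComplexConjugate

private lemma sum_rot {α β γ : Type*} [Fintype α] [Fintype β] [Fintype γ] (f : α → β → γ → ℂ) :
    ∑ a, ∑ b, ∑ c, f a b c = ∑ b, ∑ c, ∑ a, f a b c := by
  rw [Finset.sum_comm]
  exact Finset.sum_congr rfl fun b _ => Finset.sum_comm

private lemma key_rank_one {ι κ κ' : Type*} [Fintype ι] [Fintype κ] [Fintype κ']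
    (x : κ → ι → ℂ) (y : κ' → ι → ℂ) (u : ι → ℂ)
    (H : ∀ a c, (∑ k, x k a * conj (x k c)) + ∑ l, y l a * conj (y l c)
      = u a * conj (u c)) (k : κ) :
    (∑ a, conj (u a) * u a) • x k = (∑ a, conj (u a) * x k a) • u := by
  classical
  set ip : (ι → ℂ) → (ι → ℂ) → ℂ := fun v w => ∑ a, conj (v a) * w a with hip
  have ip_conj : ∀ v z : ι → ℂ, ip v z = conj (ip z v) := by
    intro v z
    simp [hip, map_sum, _root_.map_mul, mul_comm]
  have e : ∀ v w z : ι → ℂ, ip v z * ip z w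
      = ∑ a, ∑ c, (conj (v a) * w c) * (z a * conj (z c)) := by
    intro v w z
    rw [hip]
    simp only
    rw [Finset.sum_mul_sum]
    exact Finset.sum_congr rfl fun a _ => Finset.sum_congr rfl fun c _ => by ring
  have master : ∀ v w : ι → ℂ,
      (∑ j, ip v (x j) * ip (x j) w) + ∑ l, ip v (y l) * ip (y l) w
        = ip v u * ip u w := by
    intro v w
    calc (∑ j, ip v (x j) * ip (x j) w) + ∑ l, ip v (y l) * ip (y l) w
        = ∑ a, ∑ c, (conj (v a) * w c) *
            ((∑ j, x j a * conj (x j c)) + ∑ l, y l a * conj (y l c)) := by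
          simp only [e]
          rw [sum_rot (fun j a c => (conj (v a) * w c) * (x j a * conj (x j c))),
            sum_rot (fun l a c => (conj (v a) * w c) * (y l a * conj (y l c)))]
          simp only [← Finset.sum_add_distrib, ← Finset.mul_sum, mul_add]
      _ = ∑ a, ∑ c, (conj (v a) * w c) * (u a * conj (u c)) := by
          simp only [H]
      _ = ip v u * ip u w := (e v w u).symm
  set α : ℂ := ip u u with hα
  set β : ℂ := ip u (x k) with hβ
  set w : ι → ℂ := α • x k - β • u with hw
  have ipw : ∀ v : ι → ℂ, ip v w = α * ip v (x k) - β * ip v u := by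
    intro v
    have h1 : ∀ a, conj (v a) * w a
        = α * (conj (v a) * x k a) - β * (conj (v a) * u a) := by
      intro a; simp only [hw, Pi.sub_apply, Pi.smul_apply, smul_eq_mul]; ring
    simp only [hip]
    simp only [h1, Finset.sum_sub_distrib, Finset.mul_sum]
  have huw : ip u w = 0 := by rw [ipw u, ← hα, ← hβ]; ring
  have hterm : ∀ z : ι → ℂ, ip w z * ip z w = (Complex.normSq (ip z w) : ℂ) := by
    intro z; rw [ip_conj w z, mul_comm, Complex.mul_conj]
  have hm := master w w
  rw [huw, mul_zero] at hm
  simp only [hterm] at hm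
  have hre : (∑ j, Complex.normSq (ip (x j) w)) + ∑ l, Complex.normSq (ip (y l) w) = 0 := by
    exact_mod_cast hm
  have hA : 0 ≤ ∑ j, Complex.normSq (ip (x j) w) :=
    Finset.sum_nonneg fun _ _ => Complex.normSq_nonneg _
  have hB : 0 ≤ ∑ l, Complex.normSq (ip (y l) w) :=
    Finset.sum_nonneg fun _ _ => Complex.normSq_nonneg _
  have hA0 : ∑ j, Complex.normSq (ip (x j) w) = 0 := by linarith
  have hxkw : ip (x k) w = 0 := by
    have := (Finset.sum_eq_zero_iff_of_nonneg
      (fun j _ => Complex.normSq_nonneg (ip (x j) w))).mp hA0 k (Finset.mem_univ k)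
    exact Complex.normSq_eq_zero.mp this
  have hww : ip w w = 0 := by
    rw [ipw w, ip_conj w (x k), hxkw, ip_conj w u, huw]
    simp
  have hw0 : w = 0 := by
    have h2 : ∑ b, Complex.normSq (w b) = 0 := by
      have h3 : ip w w = ((∑ b, Complex.normSq (w b) : ℝ) : ℂ) := by
        rw [hip]
        push_cast
        exact Finset.sum_congr rfl fun b _ => by rw [mul_comm, Complex.mul_conj]
      rw [h3] at hww
      exact_mod_cast hww
    funext a
    have := (Finset.sum_eq_zero_iff_of_nonneg
      (fun b _ => Complex.normSq_nonneg (w b))).mp h2 a (Finset.mem_univ a)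
    simpa using Complex.normSq_eq_zero.mp this
  have hfin : α • x k = β • u := by
    have := hw ▸ hw0
    exact sub_eq_zero.mp this
  simpa only [hα, hβ, hip] using hfin

private lemma kraus_entry {d : ℕ} (X : Matrix (Fin d) (Fin d) ℂ) (b e a c : Fin d) :
    (X * Matrix.single b e (1:ℂ) * Xᴴ) a c = X a b * conj (X c e) := by
  simp [Matrix.mul_apply, Matrix.single, Matrix.conjTranspose_apply, mul_ite, ite_mul,
    mul_one, mul_zero, zero_mul, one_mul, Finset.sum_ite_eq, Finset.sum_ite_eq', ite_and,
    Finset.mul_sum, Finset.sum_mul]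

private lemma trace_unitary_conj {d : ℕ} {U : Matrix (Fin d) (Fin d) ℂ}
    (hU : Uᴴ * U = 1) (ρ : Matrix (Fin d) (Fin d) ℂ) : (U * ρ * Uᴴ).trace = ρ.trace := by
  rw [Matrix.trace_mul_comm, ← Matrix.mul_assoc, hU, Matrix.one_mul]

private lemma isDensity_single {d : ℕ} (b : Fin d) :
    IsDensity (Matrix.single b b (1:ℂ)) := by
  constructor
  · have hH : (Matrix.single b b (1:ℂ))ᴴ = Matrix.single b b (1:ℂ) := by
      ext i j
      simp [Matrix.single, Matrix.conjTranspose_apply, and_comm]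
    have h1 : (Matrix.single b b (1:ℂ))ᴴ * Matrix.single b b (1:ℂ)
        = Matrix.single b b (1:ℂ) := by
      rw [hH, Matrix.single_mul_single_same, one_mul]
    exact h1 ▸ Matrix.posSemidef_conjTranspose_mul_self _
  · simp

private lemma kraus_trace_single {d : ℕ} (Z : Matrix (Fin d) (Fin d) ℂ) (b : Fin d) :
    (Z * Matrix.single b b (1:ℂ) * Zᴴ).trace = ((∑ a, Complex.normSq (Z a b) : ℝ) : ℂ) := by
  rw [Matrix.trace]
  push_cast
  exact Finset.sum_congr rfl fun a _ => by
    rw [Matrix.diag_apply, kraus_entry, Complex.mul_conj]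

private lemma isCP_smul_unitary {d : ℕ} (U : Matrix (Fin d) (Fin d) ℂ) (c : ℝ) (hc : 0 ≤ c) :
    IsCP (fun ρ => (c:ℂ) • (U * ρ * Uᴴ)) := by
  refine ⟨1, fun _ => (Real.sqrt c : ℂ) • U, fun ρ => ?_⟩
  rw [Fin.sum_univ_one]
  simp only [Matrix.conjTranspose_smul, Matrix.smul_mul, Matrix.mul_smul, smul_smul,
    Complex.star_def, Complex.conj_ofReal]
  rw [← Complex.ofReal_mul, Real.mul_self_sqrt hc]



/-- an operation `Φ` is coexistent with the unitary channel
`𝒰(ρ) = UρU*` iff `Φ = λ𝒰` for some `0 ≤ λ ≤ 1`. -/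
theorem stmt11 (d : ℕ) (U : Matrix (Fin d) (Fin d) ℂ)
    (hU : U ∈ Matrix.unitaryGroup (Fin d) ℂ)
    (Φ : Matrix (Fin d) (Fin d) ℂ → Matrix (Fin d) (Fin d) ℂ) (hΦ : IsOperation Φ) :
    Coexistent4 Φ (fun ρ => U * ρ * Uᴴ) ↔
      ∃ lam : ℝ, 0 ≤ lam ∧ lam ≤ 1 ∧ ∀ ρ, Φ ρ = (lam : ℂ) • (U * ρ * Uᴴ) := by
  have hU' : Uᴴ * U = 1 := by
    have := Matrix.mem_unitaryGroup_iff'.mp hU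
    rwa [Matrix.star_eq_conjTranspose] at this
  constructor
  · rintro ⟨J₁, J₂, J₃, J₄, hc1, hc2, hc3, hc4, hsum, hphi, hpsi⟩
    obtain ⟨m₁, X, hX⟩ := hc1
    obtain ⟨m₂, Z, hZ⟩ := hc2
    obtain ⟨m₃, Y, hY⟩ := hc3
    obtain ⟨m₄, W, hW⟩ := hc4
    by_cases hd : d = 0
    · subst hd
      exact ⟨0, le_refl 0, zero_le_one, fun ρ => by ext i j; exact i.elim0⟩
    have hd1 : 0 < d := Nat.pos_of_ne_zero hd
    have hdC : (d : ℂ) ≠ 0 := Nat.cast_ne_zero.mpr hd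
    have hpsi' : ∀ ρ, J₁ ρ + J₃ ρ = U * ρ * Uᴴ := fun ρ => (hpsi ρ).symm
    -- entrywise identity from applying the channel identity to std basis matrices
    have Hmat : ∀ b e a c : Fin d,
        (∑ k, X k a b * conj (X k c e)) + ∑ l, Y l a b * conj (Y l c e)
          = U a b * conj (U c e) := by
      intro b e a c
      have h := hpsi' (Matrix.single b e (1:ℂ))
      rw [hX, hY] at h
      have h2 : ((∑ k, X k * Matrix.single b e (1:ℂ) * (X k)ᴴ)
          + ∑ l, Y l * Matrix.single b e (1:ℂ) * (Y l)ᴴ) a c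
          = (U * Matrix.single b e (1:ℂ) * Uᴴ) a c := by rw [h]
      simpa [Matrix.add_apply, Matrix.sum_apply, kraus_entry] using h2
    -- norm of the flattened unitary
    have hα : (∑ p : Fin d × Fin d, conj (U p.1 p.2) * U p.1 p.2) = (d : ℂ) := by
      have h1 : (∑ p : Fin d × Fin d, conj (U p.1 p.2) * U p.1 p.2) = (Uᴴ * U).trace := by
        rw [Matrix.trace, Fintype.sum_prod_type, Finset.sum_comm]
        exact Finset.sum_congr rfl fun b _ => by
          simp [Matrix.diag_apply, Matrix.mul_apply, Matrix.conjTranspose_apply]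
      rw [h1, hU', Matrix.trace_one]
      simp
    -- each Kraus operator of J₁ is proportional to U
    have hXk : ∀ k, ∃ c : ℂ, ∀ a b, X k a b = c * U a b := by
      intro k
      have h3 := key_rank_one (fun k (p : Fin d × Fin d) => X k p.1 p.2)
        (fun l (p : Fin d × Fin d) => Y l p.1 p.2)
        (fun p : Fin d × Fin d => U p.1 p.2) (fun p q => Hmat p.2 q.2 p.1 q.1) k
      beta_reduce at h3
      rw [hα] at h3
      refine ⟨(∑ p : Fin d × Fin d, conj (U p.1 p.2) * X k p.1 p.2) / d, fun a b => ?_⟩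
      have h4 := congr_fun h3 (a, b)
      simp only [Pi.smul_apply, smul_eq_mul] at h4
      field_simp
      linear_combination h4
    choose c hc using hXk
    set μ : ℝ := ∑ k, Complex.normSq (c k) with hμ
    have hJ1 : ∀ ρ, J₁ ρ = (μ:ℂ) • (U * ρ * Uᴴ) := by
      intro ρ
      rw [hX]
      have hXmat : ∀ k, X k = c k • U := fun k => Matrix.ext fun a b => by
        simp [hc k a b]
      calc ∑ k, X k * ρ * (X k)ᴴ
          = ∑ k, (Complex.normSq (c k) : ℂ) • (U * ρ * Uᴴ) := by
            refine Finset.sum_congr rfl fun k _ => ?_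
            rw [hXmat k]
            simp only [Matrix.conjTranspose_smul, Matrix.smul_mul, Matrix.mul_smul, smul_smul,
              Complex.star_def]
            rw [mul_comm ((starRingEnd ℂ) (c k)) (c k), Complex.mul_conj]
        _ = (μ:ℂ) • (U * ρ * Uᴴ) := by
            rw [← Finset.sum_smul, hμ]
            norm_cast
    -- J₂ vanishes
    have hZ0 : ∀ mm a b, Z mm a b = 0 := by
      have key0 : ∀ b : Fin d, ((∑ m', ∑ a', Complex.normSq (Z m' a' b)) : ℝ)
          + ((∑ m', ∑ a', Complex.normSq (W m' a' b)) : ℝ) = 0 := by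
        intro b
        set E := Matrix.single b b (1:ℂ) with hE
        have hρ := isDensity_single b
        have h1 := hsum E hρ
        have hψtr : (J₁ E + J₃ E).trace = 1 := by
          rw [hpsi' E, trace_unitary_conj hU', hρ.2]
        have hsplit : (J₁ E + J₂ E + J₃ E + J₄ E).trace
            = (J₁ E + J₃ E).trace + ((J₂ E).trace + (J₄ E).trace) := by
          simp only [Matrix.trace_add]; ring
        rw [hsplit, hψtr] at h1
        have h2 : (J₂ E).trace + (J₄ E).trace = 0 :=
          add_left_cancel (h1.trans (add_zero (1:ℂ)).symm)
        have h3 : (J₂ E).trace = ((∑ m', ∑ a', Complex.normSq (Z m' a' b) : ℝ) : ℂ) := by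
          rw [hZ, Matrix.trace_sum]
          push_cast
          exact Finset.sum_congr rfl fun m' _ => by rw [hE, kraus_trace_single]; push_cast; rfl
        have h4 : (J₄ E).trace = ((∑ m', ∑ a', Complex.normSq (W m' a' b) : ℝ) : ℂ) := by
          rw [hW, Matrix.trace_sum]
          push_cast
          exact Finset.sum_congr rfl fun m' _ => by rw [hE, kraus_trace_single]; push_cast; rfl
        rw [h3, h4] at h2
        exact_mod_cast h2
      intro mm a b
      have hAnn : 0 ≤ ∑ m', ∑ a', Complex.normSq (Z m' a' b) :=
        Finset.sum_nonneg fun _ _ => Finset.sum_nonneg fun _ _ => Complex.normSq_nonneg _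
      have hBnn : 0 ≤ ∑ m', ∑ a', Complex.normSq (W m' a' b) :=
        Finset.sum_nonneg fun _ _ => Finset.sum_nonneg fun _ _ => Complex.normSq_nonneg _
      have hA0 : ∑ m', ∑ a', Complex.normSq (Z m' a' b) = 0 := by
        have := key0 b; linarith
      have h5 := (Finset.sum_eq_zero_iff_of_nonneg
        (fun m' _ => Finset.sum_nonneg fun a' _ => Complex.normSq_nonneg (Z m' a' b))).mp
        hA0 mm (Finset.mem_univ mm)
      have h6 := (Finset.sum_eq_zero_iff_of_nonneg
        (fun a' _ => Complex.normSq_nonneg (Z mm a' b))).mp h5 a (Finset.mem_univ a)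
      exact Complex.normSq_eq_zero.mp h6
    have hJ2 : ∀ ρ, J₂ ρ = 0 := by
      intro ρ
      rw [hZ]
      refine Finset.sum_eq_zero fun mm _ => ?_
      have hZm : Z mm = 0 := Matrix.ext fun a b => hZ0 mm a b
      rw [hZm, Matrix.zero_mul, Matrix.zero_mul]
    have hΦeq : ∀ ρ, Φ ρ = (μ:ℂ) • (U * ρ * Uᴴ) := fun ρ => by
      rw [hphi ρ, hJ1 ρ, hJ2 ρ, add_zero]
    refine ⟨μ, Finset.sum_nonneg fun _ _ => Complex.normSq_nonneg _, ?_, hΦeq⟩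
    obtain ⟨t, ht1, ht0, ht2⟩ := hΦ.2 _ (isDensity_single (⟨0, hd1⟩ : Fin d))
    rw [hΦeq _, Matrix.trace_smul, trace_unitary_conj hU',
      (isDensity_single (⟨0, hd1⟩ : Fin d)).2, smul_eq_mul, mul_one] at ht1
    have : μ = t := by exact_mod_cast ht1
    linarith
  · rintro ⟨lam, h0, h1, hlam⟩
    refine ⟨fun ρ => (lam:ℂ) • (U * ρ * Uᴴ), fun _ => 0,
      fun ρ => ((1-lam : ℝ):ℂ) • (U * ρ * Uᴴ), fun _ => 0,
      isCP_smul_unitary U lam h0, ⟨0, fun _ => 0, fun ρ => by simp⟩,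
      isCP_smul_unitary U (1-lam) (by linarith), ⟨0, fun _ => 0, fun ρ => by simp⟩,
      ?_, fun ρ => by rw [hlam ρ, add_zero], fun ρ => ?_⟩
    · intro ρ hρ
      simp only [add_zero]
      rw [← add_smul]
      have : ((lam:ℂ) + ((1-lam:ℝ):ℂ)) = 1 := by push_cast; ring
      rw [this, one_smul, trace_unitary_conj hU', hρ.2]
    · simp only
      rw [← add_smul]
      have : ((lam:ℂ) + ((1-lam:ℝ):ℂ)) = 1 := by push_cast; ring
      rw [this, one_smul]
end

section
/- If two pure (Kraus rank-one) operations Φ(ρ) = VρV* and Ψ(ρ) = WρW* are coexistent, then they are trivially coexistent: either Φ + Ψ is an operation (trace-nonincreasing CP map), or Φ − Ψ is an operation, or Ψ − Φ is an operation. -/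
open Matrix Kronecker
open scoped ComplexOrder

lemma aux_sum_mulVec {n ι : Type*} [Fintype n] (s : Finset ι) (M : ι → Matrix n n ℂ)
    (y : n → ℂ) : (∑ i ∈ s, M i) *ᵥ y = ∑ i ∈ s, M i *ᵥ y := by
  ext k
  simp [Matrix.mulVec, dotProduct, Matrix.sum_apply, Finset.sum_mul]
  rw [Finset.sum_comm]

lemma aux_dot_sum {n ι : Type*} [Fintype n] (s : Finset ι) (v : ι → n → ℂ) (y : n → ℂ) :
    star y ⬝ᵥ (∑ i ∈ s, v i) = ∑ i ∈ s, star y ⬝ᵥ v i := by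
  simp [dotProduct, Finset.sum_apply, Finset.mul_sum]
  rw [Finset.sum_comm]

lemma aux_psd_trace_nonneg {n : Type*} [Fintype n] [DecidableEq n] {M : Matrix n n ℂ}
    (h : M.PosSemidef) : 0 ≤ M.trace := by
  rw [Matrix.trace]
  apply Finset.sum_nonneg
  intro i _
  exact h.diag_nonneg

lemma aux_trace_mul_psd_nonneg {n : Type*} [Fintype n] [DecidableEq n] {P ρ : Matrix n n ℂ}
    (hP : P.PosSemidef) (hρ : ρ.PosSemidef) : 0 ≤ (P * ρ).trace := by
  obtain ⟨B, hB⟩ : ∃ B : Matrix n n ℂ, ρ = Bᴴ * B := by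
    open MatrixOrder in
    obtain ⟨X, hX, -, rfl⟩ :=
      CFC.exists_sqrt_of_isSelfAdjoint_of_quasispectrumRestricts hρ.isHermitian
        (QuasispectrumRestricts.nnreal_of_nonneg hρ.nonneg)
    exact ⟨X, by rw [← Matrix.star_eq_conjTranspose, hX.star_eq]⟩
  have key : (P * ρ).trace = (B * P * Bᴴ).trace := by
    rw [hB, ← Matrix.mul_assoc, Matrix.trace_mul_comm, ← Matrix.mul_assoc]
  rw [key]
  exact aux_psd_trace_nonneg (hP.mul_mul_conjTranspose_same B)

lemma aux_psd_sum {n : Type*} [Fintype n] {ι : Type*} (s : Finset ι) (f : ι → Matrix n n ℂ)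
    (h : ∀ i ∈ s, (f i).PosSemidef) : (∑ i ∈ s, f i).PosSemidef := by
  classical
  induction s using Finset.induction with
  | empty => simpa using Matrix.PosSemidef.zero
  | insert _ _ hx ih =>
    rw [Finset.sum_insert hx]
    exact ((h _ (Finset.mem_insert_self _ _)).add
      (ih (fun i hi => h i (Finset.mem_insert_of_mem hi))))

lemma aux_conj_vecMulVec {n : Type*} [Fintype n] (A : Matrix n n ℂ) (x : n → ℂ) :
    A * Matrix.vecMulVec x (star x) * Aᴴ
      = Matrix.vecMulVec (A *ᵥ x) (star (A *ᵥ x)) := by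
  ext i j
  simp only [Matrix.mul_apply, Matrix.vecMulVec_apply, Matrix.conjTranspose_apply,
    Matrix.mulVec, dotProduct, Pi.star_apply, Finset.sum_mul, Finset.mul_sum,
    star_sum, star_mul']
  apply Finset.sum_congr rfl; intro k _
  apply Finset.sum_congr rfl; intro l _
  ring

lemma aux_quad_vecMulVec {n : Type*} [Fintype n] (w y : n → ℂ) :
    star y ⬝ᵥ (Matrix.vecMulVec w (star w) *ᵥ y)
      = (Complex.normSq (star y ⬝ᵥ w) : ℂ) := by
  have h1 : Matrix.vecMulVec w (star w) *ᵥ y = (star w ⬝ᵥ y) • w := by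
    ext i
    simp [Matrix.mulVec, Matrix.vecMulVec_apply, dotProduct, Finset.mul_sum,
      mul_comm, mul_left_comm]
  rw [h1, dotProduct_smul]
  have h2 : star w ⬝ᵥ y = star (star y ⬝ᵥ w) := by
    rw [Matrix.star_dotProduct]
  rw [h2, smul_eq_mul, Complex.normSq_eq_conj_mul_self]
  rfl

lemma aux_dominated {n : Type*} [Fintype n] {u v : n → ℂ}
    (h : ∀ y : n → ℂ, Complex.normSq (star y ⬝ᵥ v) ≤ Complex.normSq (star y ⬝ᵥ u)) :
    ∃ t : ℂ, v = t • u := by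
  by_cases hu : u = 0
  · refine ⟨0, ?_⟩
    have h0 := h v
    simp only [hu, dotProduct_zero, map_zero] at h0
    have hz : Complex.normSq (star v ⬝ᵥ v) = 0 :=
      le_antisymm h0 (Complex.normSq_nonneg _)
    have : star v ⬝ᵥ v = 0 := Complex.normSq_eq_zero.mp hz
    rw [dotProduct_star_self_eq_zero.mp this]
    simp
  · set nn : ℂ := star u ⬝ᵥ u with hnn_def
    have hnn : nn ≠ 0 := fun h0 => hu (dotProduct_star_self_eq_zero.mp h0)
    have hnn_star : star nn = nn := (Matrix.star_dotProduct u u).symm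
    set a : ℂ := star u ⬝ᵥ v with ha_def
    set t : ℂ := a / nn with ht_def
    set y : n → ℂ := v - t • u with hy_def
    have hyu : star y ⬝ᵥ u = 0 := by
      have hvu : star v ⬝ᵥ u = star a := Matrix.star_dotProduct v u
      rw [hy_def]
      simp only [star_sub, sub_dotProduct, star_smul, smul_dotProduct, hvu]
      rw [← hnn_def, ht_def, star_div₀, hnn_star, smul_eq_mul]
      field_simp
      ring
    have hyv : star y ⬝ᵥ v = star y ⬝ᵥ y := by
      have : v = y + t • u := by rw [hy_def]; abel
      nth_rewrite 1 [this]
      rw [dotProduct_add, dotProduct_smul, hyu, smul_zero, add_zero]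
    have h0 := h y
    rw [hyv, hyu] at h0
    simp only [map_zero] at h0
    have hz : Complex.normSq (star y ⬝ᵥ y) = 0 :=
      le_antisymm h0 (Complex.normSq_nonneg _)
    have hy0 : y = 0 :=
      dotProduct_star_self_eq_zero.mp (Complex.normSq_eq_zero.mp hz)
    refine ⟨t, ?_⟩
    have h4 : v - t • u = 0 := by rw [← hy_def]; exact hy0
    exact sub_eq_zero.mp h4

lemma aux_ext_mulVec {n : Type*} [Fintype n] [DecidableEq n] {A B : Matrix n n ℂ}
    (h : ∀ x, A *ᵥ x = B *ᵥ x) : A = B := by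
  ext i j
  have := congrFun (h (Pi.single j 1)) i
  simpa [Matrix.mulVec_single] using this

lemma aux_prop_global {n : Type*} [Fintype n] [DecidableEq n] (A B : Matrix n n ℂ)
    (h : ∀ x : n → ℂ, ∃ t : ℂ, A *ᵥ x = t • (B *ᵥ x)) : ∃ c : ℂ, A = c • B := by
  by_cases hB : ∀ x, B *ᵥ x = 0
  · refine ⟨0, ?_⟩
    apply aux_ext_mulVec
    intro x
    obtain ⟨t, ht⟩ := h x
    rw [Matrix.smul_mulVec, ht, hB, smul_zero, smul_zero]
  · push_neg at hB
    obtain ⟨y, hy⟩ := hB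
    obtain ⟨c, hc⟩ := h y
    refine ⟨c, aux_ext_mulVec fun x => ?_⟩
    rw [Matrix.smul_mulVec]
    obtain ⟨t, ht⟩ := h x
    by_cases hx : B *ᵥ x = 0
    · rw [ht, hx, smul_zero, smul_zero]
    · by_cases hdep : ∃ α : ℂ, B *ᵥ x = α • (B *ᵥ y)
      · obtain ⟨α, hα⟩ := hdep
        have hBz : B *ᵥ (x - α • y) = 0 := by
          rw [Matrix.mulVec_sub, Matrix.mulVec_smul, hα, sub_self]
        obtain ⟨s, hs⟩ := h (x - α • y)
        rw [hBz, smul_zero] at hs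
        have hAz : A *ᵥ x = α • (A *ᵥ y) := by
          have := hs
          rw [Matrix.mulVec_sub, Matrix.mulVec_smul, sub_eq_zero] at this
          exact this
        rw [hAz, hc, hα, smul_comm]
      · push_neg at hdep
        obtain ⟨s, hs⟩ := h (x + y)
        rw [Matrix.mulVec_add, Matrix.mulVec_add, ht, hc, smul_add] at hs
        -- hs : t • B*ᵥx + c • B*ᵥy = s • B*ᵥx + s • B*ᵥy
        have hts : t = s := by
          by_contra hne
          apply hdep ((s - c) / (t - s))
          have h1 : (t - s) • (B *ᵥ x) = (s - c) • (B *ᵥ y) := by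
            have := hs
            rw [sub_smul, sub_smul]
            linear_combination (norm := module) this
          have hts0 : (t - s) ≠ 0 := sub_ne_zero.mpr hne
          rw [div_eq_mul_inv, mul_comm, mul_smul, ← h1, inv_smul_smul₀ hts0]
        have hsc : s = c := by
          have h2 : (s - c) • (B *ᵥ y) = 0 := by
            rw [hts] at hs
            rw [sub_smul]
            linear_combination (norm := module) -hs
          rcases smul_eq_zero.mp h2 with h3 | h3
          · exact sub_eq_zero.mp h3
          · exact absurd h3 hy
        rw [ht, hts, hsc]

lemma aux_kraus_scalar {n : Type*} [Fintype n] [DecidableEq n] {m : ℕ}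
    (X : Fin m → Matrix n n ℂ) (J : Finset (Fin m)) (V : Matrix n n ℂ)
    (hΦ : ∀ ρ, V * ρ * Vᴴ = ∑ i ∈ J, X i * ρ * (X i)ᴴ) :
    ∀ j ∈ J, ∃ c : ℂ, X j = c • V := by
  intro j hj
  apply aux_prop_global
  intro x
  apply aux_dominated
  intro y
  have heq := hΦ (Matrix.vecMulVec x (star x))
  rw [aux_conj_vecMulVec,
    Finset.sum_congr rfl (fun i _ => aux_conj_vecMulVec (X i) x)] at heq
  have heq2 := congrArg (fun M : Matrix n n ℂ => star y ⬝ᵥ (M *ᵥ y)) heq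
  rw [aux_quad_vecMulVec, aux_sum_mulVec, aux_dot_sum,
    Finset.sum_congr rfl (fun i (_ : i ∈ J) => aux_quad_vecMulVec (X i *ᵥ x) y),
    ← Complex.ofReal_sum] at heq2
  have heq3 := Complex.ofReal_inj.mp heq2
  rw [heq3]
  exact Finset.single_le_sum (f := fun i => Complex.normSq (star y ⬝ᵥ X i *ᵥ x)) (fun i _ => Complex.normSq_nonneg _) hj



lemma aux_cx_unit {z : ℂ} (h0 : 0 ≤ z) (h1 : 0 ≤ 1 - z) :
    ∃ t : ℝ, z = (t : ℂ) ∧ 0 ≤ t ∧ t ≤ 1 := by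
  obtain ⟨hre, him⟩ := Complex.nonneg_iff.mp h0
  obtain ⟨hre1, _⟩ := Complex.nonneg_iff.mp h1
  simp only [Complex.sub_re, Complex.one_re] at hre1
  refine ⟨z.re, ?_, hre, by linarith⟩
  apply Complex.ext <;> simp [← him]

lemma aux_trace_conj {n : Type*} [Fintype n] (A ρ : Matrix n n ℂ) :
    (A * ρ * Aᴴ).trace = (Aᴴ * A * ρ).trace := by
  rw [Matrix.trace_mul_comm, ← Matrix.mul_assoc, Matrix.mul_assoc]

lemma aux_trace_psd_bound {n : Type*} [Fintype n] [DecidableEq n] (S ρ : Matrix n n ℂ)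
    (hS : S.PosSemidef) (hSle : ((1 : Matrix n n ℂ) - S).PosSemidef)
    (hρp : ρ.PosSemidef) (hρt : ρ.trace = 1) :
    ∃ s : ℝ, (S * ρ).trace = (s : ℂ) ∧ 0 ≤ s ∧ s ≤ 1 := by
  apply aux_cx_unit (aux_trace_mul_psd_nonneg hS hρp)
  have h2 := aux_trace_mul_psd_nonneg hSle hρp
  rwa [Matrix.sub_mul, Matrix.one_mul, Matrix.trace_sub, hρt] at h2

/-- coexistent pure (Kraus rank-one) operations are trivially coexistent:
their sum, or one of their differences, is again an operation. -/
theorem stmt13 (d : ℕ) (V W : Matrix (Fin d) (Fin d) ℂ)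
    (hV : ((1 : Matrix (Fin d) (Fin d) ℂ) - Vᴴ * V).PosSemidef)
    (hW : ((1 : Matrix (Fin d) (Fin d) ℂ) - Wᴴ * W).PosSemidef)
    (hco : KrausCoexistent (fun ρ => V * ρ * Vᴴ) (fun ρ => W * ρ * Wᴴ)) :
    IsOperation (fun ρ => V * ρ * Vᴴ + W * ρ * Wᴴ) ∨
    IsOperation (fun ρ => V * ρ * Vᴴ - W * ρ * Wᴴ) ∨
    IsOperation (fun ρ => W * ρ * Wᴴ - V * ρ * Vᴴ) := by
  obtain ⟨m, X, J₁, J₂, hΦ0, hΨ0, hsum⟩ := hco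
  have hΦ : ∀ ρ, V * ρ * Vᴴ = ∑ j ∈ J₁, X j * ρ * (X j)ᴴ := hΦ0
  have hΨ : ∀ ρ, W * ρ * Wᴴ = ∑ j ∈ J₂, X j * ρ * (X j)ᴴ := hΨ0
  -- the V-side trace bound, used in both cases of A
  have hVtr : ∀ ρ : Matrix (Fin d) (Fin d) ℂ, IsDensity ρ →
      ∃ s : ℝ, (V * ρ * Vᴴ).trace = (s : ℂ) ∧ 0 ≤ s ∧ s ≤ 1 := by
    intro ρ hρ
    obtain ⟨s, hs, h0, h1⟩ := aux_trace_psd_bound (Vᴴ * V) ρ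
      (Matrix.posSemidef_conjTranspose_mul_self V) hV hρ.1 hρ.2
    exact ⟨s, by rw [aux_trace_conj]; exact hs, h0, h1⟩
  have hWtr : ∀ ρ : Matrix (Fin d) (Fin d) ℂ, IsDensity ρ →
      ∃ s : ℝ, (W * ρ * Wᴴ).trace = (s : ℂ) ∧ 0 ≤ s ∧ s ≤ 1 := by
    intro ρ hρ
    obtain ⟨s, hs, h0, h1⟩ := aux_trace_psd_bound (Wᴴ * W) ρ
      (Matrix.posSemidef_conjTranspose_mul_self W) hW hρ.1 hρ.2
    exact ⟨s, by rw [aux_trace_conj]; exact hs, h0, h1⟩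
  by_cases hAB : ∃ j ∈ J₁ ∩ J₂, X j ≠ 0
  · -- Case A : W is a multiple of V
    obtain ⟨j, hjmem, hj0⟩ := hAB
    obtain ⟨c, hc⟩ := aux_kraus_scalar X J₁ V hΦ j (Finset.mem_inter.mp hjmem).1
    obtain ⟨e, he⟩ := aux_kraus_scalar X J₂ W hΨ j (Finset.mem_inter.mp hjmem).2
    have hcne : c ≠ 0 := fun h => hj0 (by simp [hc, h])
    have hene : e ≠ 0 := fun h => hj0 (by simp [he, h])
    have hce : c • V = e • W := by rw [← hc, he]
    set lam : ℂ := c / e with hlam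
    have hWV : W = lam • V := by
      rw [hlam, div_eq_mul_inv, mul_comm, mul_smul, hce, inv_smul_smul₀ hene]
    set μ : ℝ := Complex.normSq lam with hμ
    have hμ0 : 0 ≤ μ := Complex.normSq_nonneg lam
    have hWr : ∀ ρ : Matrix (Fin d) (Fin d) ℂ,
        W * ρ * Wᴴ = (μ : ℂ) • (V * ρ * Vᴴ) := by
      intro ρ
      rw [hWV, Matrix.conjTranspose_smul, Matrix.smul_mul, Matrix.smul_mul,
        Matrix.mul_smul, smul_smul, Complex.star_def, Complex.mul_conj]
    -- key scalar bound : μ * s ≤ 1 for the V-trace s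
    have key : ∀ ρ : Matrix (Fin d) (Fin d) ℂ, IsDensity ρ →
        ∃ s : ℝ, (V * ρ * Vᴴ).trace = (s : ℂ) ∧ 0 ≤ s ∧ s ≤ 1 ∧ μ * s ≤ 1 := by
      intro ρ hρ
      obtain ⟨s, hs, h0, h1⟩ := hVtr ρ hρ
      obtain ⟨s', hs', h0', h1'⟩ := hWtr ρ hρ
      have : ((μ * s : ℝ) : ℂ) = (s' : ℂ) := by
        push_cast
        rw [← hs, ← hs', hWr ρ, Matrix.trace_smul, smul_eq_mul]
      have hμs : μ * s = s' := by exact_mod_cast this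
      exact ⟨s, hs, h0, h1, hμs ▸ h1'⟩
    by_cases hμ1 : μ ≤ 1
    · -- Φ - Ψ is an operation
      refine Or.inr (Or.inl ⟨⟨1, fun _ => ((Real.sqrt (1 - μ) : ℝ) : ℂ) • V, ?_⟩, ?_⟩)
      · intro ρ
        simp only [Fin.sum_univ_one]
        have hsq : ((Real.sqrt (1 - μ) : ℝ) : ℂ) * star ((Real.sqrt (1 - μ) : ℝ) : ℂ)
            = ((1 - μ : ℝ) : ℂ) := by
          rw [Complex.star_def, Complex.conj_ofReal, ← Complex.ofReal_mul,
            Real.mul_self_sqrt (by linarith : (0:ℝ) ≤ 1 - μ)]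
        rw [Matrix.conjTranspose_smul, Matrix.smul_mul, Matrix.smul_mul,
          Matrix.mul_smul, smul_smul, hsq, hWr ρ]
        push_cast
        module
      · intro ρ hρ
        obtain ⟨s, hs, h0, h1, hμs⟩ := key ρ hρ
        refine ⟨(1 - μ) * s, ?_, by nlinarith, by nlinarith⟩
        simp only [Matrix.trace_sub, hWr ρ, Matrix.trace_smul, smul_eq_mul, hs]
        push_cast
        ring
    · -- Ψ - Φ is an operation
      push_neg at hμ1
      refine Or.inr (Or.inr ⟨⟨1, fun _ => ((Real.sqrt (μ - 1) : ℝ) : ℂ) • V, ?_⟩, ?_⟩)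
      · intro ρ
        simp only [Fin.sum_univ_one]
        have hsq : ((Real.sqrt (μ - 1) : ℝ) : ℂ) * star ((Real.sqrt (μ - 1) : ℝ) : ℂ)
            = ((μ - 1 : ℝ) : ℂ) := by
          rw [Complex.star_def, Complex.conj_ofReal, ← Complex.ofReal_mul,
            Real.mul_self_sqrt (by linarith : (0:ℝ) ≤ μ - 1)]
        rw [Matrix.conjTranspose_smul, Matrix.smul_mul, Matrix.smul_mul,
          Matrix.mul_smul, smul_smul, hsq, hWr ρ]
        push_cast
        module
      · intro ρ hρ
        obtain ⟨s, hs, h0, h1, hμs⟩ := key ρ hρ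
        refine ⟨(μ - 1) * s, ?_, by nlinarith, by nlinarith⟩
        simp only [Matrix.trace_sub, hWr ρ, Matrix.trace_smul, smul_eq_mul, hs]
        push_cast
        ring
  · -- Case B : Φ + Ψ is an operation
    push_neg at hAB
    refine Or.inl ⟨⟨2, ![V, W], ?_⟩, ?_⟩
    · intro ρ
      simp [Fin.sum_univ_two]
    · intro ρ hρ
      set Su : Matrix (Fin d) (Fin d) ℂ := ∑ j ∈ J₁ ∪ J₂, (X j)ᴴ * X j with hSu
      have hSuPSD : Su.PosSemidef :=
        aux_psd_sum _ _ fun i _ => Matrix.posSemidef_conjTranspose_mul_self (X i)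
      have hSule : ((1 : Matrix (Fin d) (Fin d) ℂ) - Su).PosSemidef := by
        have hsd := Finset.sum_sdiff (f := fun j => (X j)ᴴ * X j)
          (Finset.subset_univ (J₁ ∪ J₂))
        have heq : (1 : Matrix (Fin d) (Fin d) ℂ) - Su
            = ((1 : Matrix (Fin d) (Fin d) ℂ) - ∑ j, (X j)ᴴ * X j)
              + ∑ j ∈ Finset.univ \ (J₁ ∪ J₂), (X j)ᴴ * X j := by
          rw [hSu, ← hsd]; abel
        rw [heq]
        exact hsum.add (aux_psd_sum _ _ fun i _ =>
          Matrix.posSemidef_conjTranspose_mul_self (X i))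
      obtain ⟨s, hs, h0, h1⟩ := aux_trace_psd_bound Su ρ hSuPSD hSule hρ.1 hρ.2
      refine ⟨s, ?_, h0, h1⟩
      have htr : ∀ (A : Matrix (Fin d) (Fin d) ℂ) (J : Finset (Fin m)),
          (∀ σ, A * σ * Aᴴ = ∑ j ∈ J, X j * σ * (X j)ᴴ) →
          (A * ρ * Aᴴ).trace = ((∑ j ∈ J, (X j)ᴴ * X j) * ρ).trace := by
        intro A J hA
        rw [hA ρ, Matrix.trace_sum, Finset.sum_mul, Matrix.trace_sum]
        exact Finset.sum_congr rfl fun i _ => aux_trace_conj (X i) ρ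
      have hinter : ∑ j ∈ J₁ ∩ J₂, (X j)ᴴ * X j = 0 :=
        Finset.sum_eq_zero fun i hi => by rw [hAB i hi]; simp
      have hsplit : (∑ j ∈ J₁, (X j)ᴴ * X j) + ∑ j ∈ J₂, (X j)ᴴ * X j = Su := by
        rw [hSu, ← Finset.sum_union_inter, hinter, add_zero]
      calc (V * ρ * Vᴴ + W * ρ * Wᴴ).trace
          = ((∑ j ∈ J₁, (X j)ᴴ * X j) * ρ).trace
            + ((∑ j ∈ J₂, (X j)ᴴ * X j) * ρ).trace := by
            rw [Matrix.trace_add, htr V J₁ hΦ, htr W J₂ hΨ]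
        _ = (Su * ρ).trace := by
            rw [← Matrix.trace_add, ← Matrix.add_mul, hsplit]
        _ = (s : ℂ) := hs
end

section
/- For any rank-one projection P on ℂ^d with d ≥ 2, the Lüders operations Λ_P(ρ) = PρP and the identity operation 𝓘(ρ) = ρ are not coexistent: none of Λ_P + 𝓘, Λ_P − 𝓘, 𝓘 − Λ_P is a quantum operation, hence by the pure-operation criterion they are not coexistent. -/
open Matrix Kronecker
open scoped ComplexOrder

lemma sum_mul_star_eq_zero {ι : Type*} (s : Finset ι) (f : ι → ℂ)
    (h : ∑ j ∈ s, f j * star (f j) = 0) : ∀ j ∈ s, f j = 0 := by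
  have h2 : ((∑ j ∈ s, Complex.normSq (f j) : ℝ) : ℂ) = 0 := by
    push_cast
    rw [← h]
    exact Finset.sum_congr rfl fun j _ => (Complex.mul_conj (f j)).symm
  have h3 : ∑ j ∈ s, Complex.normSq (f j) = 0 := by exact_mod_cast h2
  intro j hj
  have := (Finset.sum_eq_zero_iff_of_nonneg (fun i _ => Complex.normSq_nonneg (f i))).mp h3 j hj
  exact Complex.normSq_eq_zero.mp this

lemma psd_diag_nonneg {n : Type*} [Fintype n] [DecidableEq n] {A : Matrix n n ℂ}
    (hA : A.PosSemidef) (i : n) : 0 ≤ A i i := by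
  exact hA.diag_nonneg

lemma trace_eq_one {d : ℕ} (P : Matrix (Fin d) (Fin d) ℂ)
    (hH : P.IsHermitian) (hP2 : P * P = P) (hr : P.rank = 1) : P.trace = 1 := by
  set U : Matrix (Fin d) (Fin d) ℂ := (hH.eigenvectorUnitary : Matrix (Fin d) (Fin d) ℂ) with hU
  have hUU : U * star U = 1 := (Matrix.mem_unitaryGroup_iff).mp hH.eigenvectorUnitary.2
  have hUU' : star U * U = 1 := (Matrix.mem_unitaryGroup_iff').mp hH.eigenvectorUnitary.2
  have hdiag : star U * P * U = diagonal (RCLike.ofReal ∘ hH.eigenvalues) :=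
    by
      have := hH.conjStarAlgAut_star_eigenvectorUnitary
      rwa [Unitary.conjStarAlgAut_apply, Unitary.coe_star, star_star] at this
  have hDD : (star U * P * U) * (star U * P * U) = star U * P * U := by
    calc (star U * P * U) * (star U * P * U) = star U * (P * (U * star U) * P) * U := by
          noncomm_ring
      _ = star U * P * U := by rw [hUU, mul_one, hP2]
  rw [hdiag] at hDD
  have hev : ∀ i, hH.eigenvalues i = 0 ∨ hH.eigenvalues i = 1 := by
    intro i
    have h1 := congrFun (congrFun hDD i) i
    simp [Matrix.diagonal_mul_diagonal, Matrix.diagonal_apply_eq, Function.comp] at h1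
    have h2 : hH.eigenvalues i * hH.eigenvalues i = hH.eigenvalues i := by exact_mod_cast h1
    rcases mul_eq_zero.mp (show hH.eigenvalues i * (hH.eigenvalues i - 1) = 0 by ring_nf; linarith) with h | h
    · exact Or.inl h
    · exact Or.inr (by linarith)
  -- exactly one nonzero eigenvalue
  have hcard : Fintype.card {i // hH.eigenvalues i ≠ 0} = 1 := by
    rw [← hH.rank_eq_card_non_zero_eigs, hr]
  obtain ⟨a, ha⟩ := Fintype.card_eq_one_iff.mp hcard
  have hzero : ∀ i, i ≠ a.1 → hH.eigenvalues i = 0 := by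
    intro i hi
    by_contra h
    exact hi (congrArg Subtype.val (ha ⟨i, h⟩))
  have hone : hH.eigenvalues a.1 = 1 := (hev a.1).resolve_left a.2
  -- trace
  have htr : P.trace = (diagonal (RCLike.ofReal ∘ hH.eigenvalues) : Matrix (Fin d) (Fin d) ℂ).trace := by
    rw [← hdiag, Matrix.trace_mul_cycle, hUU, one_mul]
  rw [htr, Matrix.trace_diagonal]
  rw [Finset.sum_eq_single a.1]
  · simp [hone]
  · intro i _ hi
    simp [hzero i hi]
  · intro h; exact absurd (Finset.mem_univ a.1) h

lemma sandwich {d : ℕ} (A B : Matrix (Fin d) (Fin d) ℂ) (a b c e : Fin d) :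
    (A * single a b (1:ℂ) * Bᴴ) c e = A c a * star (B e b) := by
  simp [Matrix.mul_apply, Matrix.single, Matrix.conjTranspose_apply, ite_and,
    ite_mul, mul_ite, Finset.sum_ite_eq, Finset.sum_ite_eq', mul_zero, zero_mul]

/-- for a rank-one projection `P` on `ℂ^d`, `d ≥ 2`, the Lüders operation
`Λ_P(ρ) = PρP` and the identity operation are not coexistent: none of `Λ_P + 𝓘`,
`Λ_P − 𝓘`, `𝓘 − Λ_P` is an operation, and `Λ_P`, `𝓘` are not coexistent. -/
theorem stmt17 (d : ℕ) (hd : 2 ≤ d) (P : Matrix (Fin d) (Fin d) ℂ)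
    (hP1 : Pᴴ = P) (hP2 : P * P = P) (hPrank : P.rank = 1) :
    ¬ IsOperation (fun ρ => P * ρ * P + ρ) ∧
    ¬ IsOperation (fun ρ => P * ρ * P - ρ) ∧
    ¬ IsOperation (fun ρ => ρ - P * ρ * P) ∧
    ¬ KrausCoexistent (fun ρ => P * ρ * P) (fun ρ : Matrix (Fin d) (Fin d) ℂ => ρ) := by
  have hH : P.IsHermitian := hP1
  have htr : P.trace = 1 := trace_eq_one P hH hP2 hPrank
  refine ⟨?_, ?_, ?_, ?_⟩
  ·
      intro hOp
      have hPSD : P.PosSemidef := by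
        have := Matrix.posSemidef_conjTranspose_mul_self P
        rwa [hP1, hP2] at this
      obtain ⟨t, ht, ht0, ht1⟩ := hOp.2 P ⟨hPSD, htr⟩
      simp only [hP2] at ht
      rw [Matrix.trace_add, htr] at ht
      have : (2:ℝ) = t := by exact_mod_cast (by rw [← ht]; norm_num : (2:ℂ) = t)
      linarith

  ·
      intro hOp
      have hd2 : (2:ℝ) ≤ (d:ℝ) := by exact_mod_cast hd
      have hd0 : (d:ℂ) ≠ 0 := by positivity
      set c : ℝ := (d:ℝ)⁻¹ with hc
      have hc0 : 0 < c := by rw [hc]; positivity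
      have hcd : c * d = 1 := by rw [hc]; field_simp
      have hρPSD : ((c:ℂ) • (1 : Matrix (Fin d) (Fin d) ℂ)).PosSemidef := by
        rw [Matrix.smul_one_eq_diagonal]
        refine Matrix.PosSemidef.diagonal fun i => Complex.zero_le_real.mpr hc0.le
      have hρtr : ((c:ℂ) • (1 : Matrix (Fin d) (Fin d) ℂ)).trace = 1 := by
        rw [Matrix.trace_smul, Matrix.trace_one, Fintype.card_fin, smul_eq_mul]
        exact_mod_cast congrArg (Complex.ofReal) hcd
      obtain ⟨t, ht, ht0, ht1⟩ := hOp.2 _ ⟨hρPSD, hρtr⟩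
      have hmid : P * ((c:ℂ) • 1) * P = (c:ℂ) • P := by
        rw [mul_smul_comm, mul_one, smul_mul_assoc, hP2]
      simp only [hmid] at ht
      rw [Matrix.trace_sub, Matrix.trace_smul, htr, hρtr, smul_eq_mul, mul_one] at ht
      have htt : c - 1 = t := by exact_mod_cast ht
      nlinarith
  · intro hOp
    obtain ⟨m, X, hX⟩ := hOp.1
    have hsum0 : ∑ k, (X k * P) * (X k * P)ᴴ = 0 := by
      have h : P - P * P * P = ∑ k, X k * P * (X k)ᴴ := hX P
      rw [hP2, hP2, sub_self] at h
      calc ∑ k, (X k * P) * (X k * P)ᴴ = ∑ k, X k * P * (X k)ᴴ := by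
            refine Finset.sum_congr rfl fun k _ => ?_
            rw [conjTranspose_mul, hP1, ← mul_assoc, mul_assoc (X k) P P, hP2]
        _ = 0 := h.symm
    have hXP : ∀ k, X k * P = 0 := by
      intro k
      ext i j
      have hdiag : ∑ p : Fin m × Fin d, (X p.1 * P) i p.2 * star ((X p.1 * P) i p.2) = 0 := by
        rw [Fintype.sum_prod_type]
        have h2 := congrFun (congrFun hsum0 i) i
        simp only [Matrix.sum_apply, Matrix.zero_apply] at h2
        rw [← h2]
        refine Finset.sum_congr rfl fun k _ => ?_
        simp [Matrix.mul_apply, Matrix.conjTranspose_apply, mul_comm]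
      have := sum_mul_star_eq_zero Finset.univ _ hdiag (k, j) (Finset.mem_univ _)
      simpa using this
    have hPσ : ∀ σ, P * σ = P * σ * P := by
      intro σ
      have h : P * σ - P * (P * σ) * P = ∑ k, X k * (P * σ) * (X k)ᴴ := hX (P * σ)
      have hz : ∑ k, X k * (P * σ) * (X k)ᴴ = 0 := by
        refine Finset.sum_eq_zero fun k _ => ?_
        rw [← mul_assoc, hXP k, zero_mul, zero_mul]
      rw [hz, ← mul_assoc, hP2] at h
      exact sub_eq_zero.mp h
    have hP0 : P ≠ 0 := by
      intro h; rw [h] at hPrank; simp at hPrank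
    obtain ⟨a, j₀, hPa⟩ : ∃ a j, P a j ≠ 0 := by
      by_contra h
      push_neg at h
      exact hP0 (by ext i j; simpa using h i j)
    have key : ∀ (j k r s : Fin d),
        (if k = s then P r j else 0) = P r j * P k s := by
      intro j k r s
      have h := hPσ (single j k (1:ℂ))
      have hent : (P * single j k (1:ℂ)) r s
          = (P * single j k (1:ℂ) * P) r s := by rw [← h]
      have hl : ∀ t, (P * single j k (1:ℂ)) r t = if k = t then P r j else 0 := by
        intro t
        by_cases hkt : k = t
        · simp [Matrix.mul_apply, Matrix.single, hkt, Finset.sum_ite_eq, eq_comm]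
        · simp [Matrix.mul_apply, Matrix.single, hkt]
      have hr : (P * single j k (1:ℂ) * P) r s = P r j * P k s := by
        rw [Matrix.mul_apply]
        simp [hl, Finset.sum_ite_eq, ite_mul]
      rw [hl s, hr] at hent
      exact hent
    have hPone : P = 1 := by
      ext k s
      by_cases hks : k = s
      · subst hks
        have h := key j₀ k a k
        rw [if_pos rfl] at h
        have h' : P a j₀ * P k k = P a j₀ * 1 := by rw [mul_one, ← h]
        rw [mul_left_cancel₀ hPa h']
        simp [Matrix.one_apply]
      · have h := (key j₀ k a s).symm
        rw [if_neg hks] at h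
        rcases mul_eq_zero.mp h with h' | h'
        · exact absurd h' hPa
        · rw [h', Matrix.one_apply_ne hks]
    rw [hPone, Matrix.rank_one, Fintype.card_fin] at hPrank
    omega
  ·
      rintro ⟨m, X, J₁, J₂, h1, h2, hKr⟩
      set i₀ : Fin d := ⟨0, by omega⟩ with hi₀
      have key : ∀ a b c e : Fin d, ∑ j ∈ J₂, X j c a * star (X j e b)
          = if a = c ∧ b = e then 1 else 0 := by
        intro a b c e
        have h := h2 (single a b (1:ℂ))
        have he := congrFun (congrFun h c) e
        simp only [Matrix.sum_apply] at he
        rw [Finset.sum_congr rfl (fun j _ => sandwich (X j) (X j) a b c e)] at he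
        rw [← he]
        simp [Matrix.single]
      have hoff : ∀ j ∈ J₂, ∀ c a : Fin d, a ≠ c → X j c a = 0 := by
        intro j hj c a hac
        have h := key a a c c
        rw [if_neg (by tauto)] at h
        exact sum_mul_star_eq_zero J₂ _ h j hj
      have hdiagsum : ∀ a b : Fin d, ∑ j ∈ J₂, X j a a * star (X j b b) = 1 := by
        intro a b
        have h := key a b a b
        rwa [if_pos ⟨rfl, rfl⟩] at h
      have hdiageq : ∀ j ∈ J₂, ∀ a b : Fin d, X j a a = X j b b := by
        intro j hj a b
        have h : ∑ j ∈ J₂, (X j a a - X j b b) * star (X j a a - X j b b) = 0 := by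
          have expand : ∀ j : Fin m, (X j a a - X j b b) * star (X j a a - X j b b)
              = X j a a * star (X j a a) - X j a a * star (X j b b)
                - (X j b b * star (X j a a) - X j b b * star (X j b b)) := by
            intro j
            simp only [star_sub]
            ring
          rw [Finset.sum_congr rfl fun j _ => expand j, Finset.sum_sub_distrib,
            Finset.sum_sub_distrib, Finset.sum_sub_distrib, hdiagsum a a, hdiagsum a b,
            hdiagsum b a, hdiagsum b b]
          ring
        exact sub_eq_zero.mp (sum_mul_star_eq_zero J₂ _ h j hj)
      have hXj : ∀ j ∈ J₂, X j = X j i₀ i₀ • 1 := by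
        intro j hj
        ext p q
        by_cases hpq : p = q
        · subst hpq
          rw [hdiageq j hj p i₀]
          simp [Matrix.one_apply]
        · simp [Matrix.one_apply_ne hpq, hoff j hj p q (fun h => hpq h.symm)]
      have hnorm : ∑ j ∈ J₂, X j i₀ i₀ * star (X j i₀ i₀) = 1 := hdiagsum i₀ i₀
      have hsumJ2 : ∑ j ∈ J₂, (X j)ᴴ * X j = 1 := by
        calc ∑ j ∈ J₂, (X j)ᴴ * X j
            = ∑ j ∈ J₂, (X j i₀ i₀ * star (X j i₀ i₀)) • 1 := by
              refine Finset.sum_congr rfl fun j hj => ?_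
              rw [hXj j hj, conjTranspose_smul, conjTranspose_one, smul_mul_smul_comm,
                mul_one, mul_comm]
              simp [Matrix.one_apply]
          _ = 1 := by rw [← Finset.sum_smul, hnorm, one_smul]
      have hsplit : (1 : Matrix (Fin d) (Fin d) ℂ) - ∑ j, (X j)ᴴ * X j
          = -(∑ j ∈ J₂ᶜ, (X j)ᴴ * X j) := by
        rw [← Finset.sum_add_sum_compl J₂ (fun j => (X j)ᴴ * X j), hsumJ2,
          sub_add_eq_sub_sub, sub_self, zero_sub]
      have hrest : ∀ j ∉ J₂, X j = 0 := by
        intro j hj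
        ext p q
        have hpos := psd_diag_nonneg hKr q
        rw [hsplit] at hpos
        have hSr : (∑ j ∈ J₂ᶜ, (X j)ᴴ * X j) q q
            = ((∑ j ∈ J₂ᶜ, ∑ k, Complex.normSq (X j k q) : ℝ) : ℂ) := by
          push_cast
          simp only [Matrix.sum_apply, Matrix.mul_apply, Matrix.conjTranspose_apply]
          refine Finset.sum_congr rfl fun j _ => Finset.sum_congr rfl fun k _ => ?_
          rw [mul_comm]
          exact Complex.mul_conj _
        set r : ℝ := ∑ j ∈ J₂ᶜ, ∑ k, Complex.normSq (X j k q) with hrr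
        have hpos' : 0 ≤ ((-r : ℝ) : ℂ) := by
          simp only [Matrix.neg_apply] at hpos
          rw [hSr] at hpos
          push_cast
          exact hpos
        have hrle : -r ≥ 0 := Complex.zero_le_real.mp hpos'
        have hrge : 0 ≤ r := Finset.sum_nonneg fun j _ =>
          Finset.sum_nonneg fun k _ => Complex.normSq_nonneg _
        have hr0 : r = 0 := le_antisymm (by linarith) hrge
        have h0 := (Finset.sum_eq_zero_iff_of_nonneg fun j _ =>
          Finset.sum_nonneg fun k _ => Complex.normSq_nonneg _).mp hr0 j (Finset.mem_compl.mpr hj)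
        have h00 := (Finset.sum_eq_zero_iff_of_nonneg fun k _ =>
          Complex.normSq_nonneg _).mp h0 p (Finset.mem_univ _)
        simpa using Complex.normSq_eq_zero.mp h00
      -- main conclusion
      have hP : P = (∑ j ∈ J₁, if j ∈ J₂ then X j i₀ i₀ * star (X j i₀ i₀) else 0) • 1 := by
        calc P = P * 1 * P := by rw [mul_one, hP2]
          _ = ∑ j ∈ J₁, X j * 1 * (X j)ᴴ := h1 1
          _ = ∑ j ∈ J₁, (if j ∈ J₂ then X j i₀ i₀ * star (X j i₀ i₀) else 0) • 1 := by
              refine Finset.sum_congr rfl fun j hj => ?_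
              by_cases hj2 : j ∈ J₂
              · rw [if_pos hj2, mul_one, hXj j hj2, conjTranspose_smul, conjTranspose_one,
                  smul_mul_smul_comm, mul_one]
                simp [Matrix.one_apply]
              · rw [if_neg hj2, hrest j hj2, zero_mul, zero_mul, zero_smul]
          _ = _ := (Finset.sum_smul).symm
      set lam : ℂ := ∑ j ∈ J₁, if j ∈ J₂ then X j i₀ i₀ * star (X j i₀ i₀) else 0 with hlamdef
      have hlam : lam * lam = lam := by
        have h := hP2
        rw [hP, smul_mul_smul_comm, mul_one] at h
        have h' := congrFun (congrFun h i₀) i₀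
        simpa [Matrix.one_apply] using h'
      rcases mul_eq_zero.mp (show lam * (lam - 1) = 0 by
        rw [mul_sub, hlam, mul_one, sub_self]) with h | h
      · rw [h, zero_smul] at hP
        rw [hP] at hPrank
        simp at hPrank
      · have hl1 : lam = 1 := by linear_combination h
        rw [hl1, one_smul] at hP
        rw [hP, Matrix.rank_one, Fintype.card_fin] at hPrank
        omega
end
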